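/- arXiv:1707.08936 — 6 statements merged into one kernel-verified Lean document; each statement's English description precedes it below -/
import Mathlib

section
/- Let φ : ℝ × ℝ² → ℝ be C² on a neighborhood of (t₀, x₀) and assume ∇ₓφ(t₀, x₀) ≠ 0. Define, for t near t₀, the unit normal ν(t) = ∇ₓφ(t, x₀)/‖∇ₓφ(t, x₀)‖ ∈ ℝ². Then the derivative ν′(t₀) is nonzero if and only if h(t₀, x₀) ≠ 0. (Equivalence of the local diffeomorphism property of the normal map with the local Bolker condition; Proposition 2.1.) -/
open Filter Topology


/-- Spatial partial derivative ∂φ/∂x¹. -/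
noncomputable def dx1 (φ : ℝ → ℝ → ℝ → ℝ) (t x₁ x₂ : ℝ) : ℝ :=
  deriv (fun y => φ t y x₂) x₁

/-- Spatial partial derivative ∂φ/∂x². -/
noncomputable def dx2 (φ : ℝ → ℝ → ℝ → ℝ) (t x₁ x₂ : ℝ) : ℝ :=
  deriv (fun y => φ t x₁ y) x₂

/-- The Bolker determinant
h(t,x) = ∂φ/∂x¹ · ∂²φ/∂t∂x² − ∂φ/∂x² · ∂²φ/∂t∂x¹. -/
noncomputable def bolker (φ : ℝ → ℝ → ℝ → ℝ) (t x₁ x₂ : ℝ) : ℝ :=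
  dx1 φ t x₁ x₂ * deriv (fun s => dx2 φ s x₁ x₂) t -
    dx2 φ t x₁ x₂ * deriv (fun s => dx1 φ s x₁ x₂) t

lemma aux_diff (φ : ℝ → ℝ → ℝ → ℝ) (t₀ x₁ x₂ : ℝ)
    (hφ : ContDiffAt ℝ 2 (fun p : ℝ × ℝ × ℝ => φ p.1 p.2.1 p.2.2) (t₀, x₁, x₂)) :
    DifferentiableAt ℝ (fun t => dx1 φ t x₁ x₂) t₀ ∧
    DifferentiableAt ℝ (fun t => dx2 φ t x₁ x₂) t₀ := by
  set F : ℝ × ℝ × ℝ → ℝ := fun p => φ p.1 p.2.1 p.2.2 with hF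
  obtain ⟨u, hu, hFu⟩ := hφ.contDiffOn (le_refl 2) (by simp)
  -- eventually, points (t,x₁,x₂) are in interior u
  have hint : interior u ∈ 𝓝 ((t₀, x₁, x₂) : ℝ × ℝ × ℝ) := interior_mem_nhds.2 hu
  have hcont : Continuous fun t : ℝ => ((t, x₁, x₂) : ℝ × ℝ × ℝ) := by continuity
  have hev : ∀ᶠ t in 𝓝 t₀, ((t, x₁, x₂) : ℝ × ℝ × ℝ) ∈ interior u :=
    (hcont.continuousAt).preimage_mem_nhds hint
  have hdiffF : ∀ t : ℝ, ((t, x₁, x₂) : ℝ × ℝ × ℝ) ∈ interior u →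
      HasFDerivAt F (fderiv ℝ F (t, x₁, x₂)) (t, x₁, x₂) := by
    intro t ht
    have : ContDiffAt ℝ 2 F (t, x₁, x₂) :=
      (hFu.mono interior_subset).contDiffAt (isOpen_interior.mem_nhds ht)
    exact (this.differentiableAt (by norm_num)).hasFDerivAt
  -- dx1 equals fderiv applied to (0,1,0)
  have hev1 : (fun t => dx1 φ t x₁ x₂) =ᶠ[𝓝 t₀]
      fun t => fderiv ℝ F (t, x₁, x₂) ((0:ℝ), (1:ℝ), (0:ℝ)) := by
    filter_upwards [hev] with t ht
    have h1 : HasDerivAt (fun y : ℝ => ((t, y, x₂) : ℝ × ℝ × ℝ)) (0, 1, 0) x₁ :=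
      (hasDerivAt_const _ _).prodMk ((hasDerivAt_id _).prodMk (hasDerivAt_const _ _))
    have h2 := (hdiffF t ht).comp_hasDerivAt x₁ h1
    exact h2.deriv
  have hev2 : (fun t => dx2 φ t x₁ x₂) =ᶠ[𝓝 t₀]
      fun t => fderiv ℝ F (t, x₁, x₂) ((0:ℝ), (0:ℝ), (1:ℝ)) := by
    filter_upwards [hev] with t ht
    have h1 : HasDerivAt (fun y : ℝ => ((t, x₁, y) : ℝ × ℝ × ℝ)) (0, 0, 1) x₂ :=
      (hasDerivAt_const _ _).prodMk ((hasDerivAt_const _ _).prodMk (hasDerivAt_id _))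
    have h2 := (hdiffF t ht).comp_hasDerivAt x₂ h1
    exact h2.deriv
  have hfd : ContDiffAt ℝ 1 (fderiv ℝ F) (t₀, x₁, x₂) := hφ.fderiv_right (by norm_num)
  have hcurve : ContDiffAt ℝ 1 (fun t : ℝ => ((t, x₁, x₂) : ℝ × ℝ × ℝ)) t₀ :=
    contDiffAt_id.prodMk contDiffAt_const
  have hcomp : ContDiffAt ℝ 1 (fun t : ℝ => fderiv ℝ F (t, x₁, x₂)) t₀ :=
    hfd.comp t₀ hcurve
  constructor
  · exact ((hcomp.clm_apply contDiffAt_const).differentiableAt one_ne_zero).congr_of_eventuallyEq hev1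
  · exact ((hcomp.clm_apply contDiffAt_const).differentiableAt one_ne_zero).congr_of_eventuallyEq hev2

/-- Proposition 2.1: the derivative of the unit normal
ν(t) = ∇ₓφ(t,x₀)/‖∇ₓφ(t,x₀)‖ at t₀ is nonzero iff the local Bolker
condition h(t₀,x₀) ≠ 0 holds. -/
theorem stmt0 (φ : ℝ → ℝ → ℝ → ℝ) (t₀ x₁ x₂ : ℝ)
    (hφ : ContDiffAt ℝ 2 (fun p : ℝ × ℝ × ℝ => φ p.1 p.2.1 p.2.2) (t₀, x₁, x₂))
    (hgrad : ((dx1 φ t₀ x₁ x₂, dx2 φ t₀ x₁ x₂) : ℝ × ℝ) ≠ 0) :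
    deriv (fun t =>
        (Real.sqrt ((dx1 φ t x₁ x₂) ^ 2 + (dx2 φ t x₁ x₂) ^ 2))⁻¹ •
          ((dx1 φ t x₁ x₂, dx2 φ t x₁ x₂) : ℝ × ℝ)) t₀ ≠ 0 ↔
      bolker φ t₀ x₁ x₂ ≠ 0 := by
  obtain ⟨ha, hb⟩ := aux_diff φ t₀ x₁ x₂ hφ
  set a₀ := dx1 φ t₀ x₁ x₂ with ha₀
  set b₀ := dx2 φ t₀ x₁ x₂ with hb₀
  set a' := deriv (fun s => dx1 φ s x₁ x₂) t₀ with ha'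
  set b' := deriv (fun s => dx2 φ s x₁ x₂) t₀ with hb'
  have hA : HasDerivAt (fun t => dx1 φ t x₁ x₂) a' t₀ := ha.hasDerivAt
  have hB : HasDerivAt (fun t => dx2 φ t x₁ x₂) b' t₀ := hb.hasDerivAt
  have hab : a₀ ≠ 0 ∨ b₀ ≠ 0 := by
    by_contra h
    push_neg at h
    exact hgrad (by simp [Prod.ext_iff, h.1, h.2])
  have hq0 : (0:ℝ) < a₀ ^ 2 + b₀ ^ 2 := by
    rcases hab with h | h
    · positivity
    · positivity
  set r₀ := Real.sqrt (a₀ ^ 2 + b₀ ^ 2) with hr₀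
  have hr0 : 0 < r₀ := Real.sqrt_pos.2 hq0
  have hr2 : r₀ ^ 2 = a₀ ^ 2 + b₀ ^ 2 := Real.sq_sqrt hq0.le
  -- derivative of q
  have hQ : HasDerivAt (fun t => (dx1 φ t x₁ x₂) ^ 2 + (dx2 φ t x₁ x₂) ^ 2)
      (2 * a₀ ^ 1 * a' + 2 * b₀ ^ 1 * b') t₀ := (hA.pow 2).add (hB.pow 2)
  have hS : HasDerivAt (fun t => Real.sqrt ((dx1 φ t x₁ x₂) ^ 2 + (dx2 φ t x₁ x₂) ^ 2))
      (1 / (2 * r₀) * (2 * a₀ ^ 1 * a' + 2 * b₀ ^ 1 * b')) t₀ := by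
    have := (Real.hasDerivAt_sqrt hq0.ne').comp t₀ hQ
    simpa [hr₀, Function.comp_def] using this
  have hG : HasDerivAt (fun t => (Real.sqrt ((dx1 φ t x₁ x₂) ^ 2 + (dx2 φ t x₁ x₂) ^ 2))⁻¹)
      (-(1 / (2 * r₀) * (2 * a₀ ^ 1 * a' + 2 * b₀ ^ 1 * b')) / r₀ ^ 2) t₀ :=
    hS.inv (by rw [← hr₀]; exact hr0.ne')
  have hP : HasDerivAt (fun t => ((dx1 φ t x₁ x₂, dx2 φ t x₁ x₂) : ℝ × ℝ)) (a', b') t₀ :=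
    hA.prodMk hB
  have hν : HasDerivAt (fun t =>
      (Real.sqrt ((dx1 φ t x₁ x₂) ^ 2 + (dx2 φ t x₁ x₂) ^ 2))⁻¹ •
        ((dx1 φ t x₁ x₂, dx2 φ t x₁ x₂) : ℝ × ℝ)) _ t₀ := hG.smul hP
  rw [hν.deriv]
  set g' := -(1 / (2 * r₀) * (2 * a₀ ^ 1 * a' + 2 * b₀ ^ 1 * b')) / r₀ ^ 2 with hg'
  set D := a₀ * b' - b₀ * a' with hD
  have hbk : bolker φ t₀ x₁ x₂ = D := rfl
  rw [hbk]
  have key : g' = -(a' * a₀ + b' * b₀) / r₀ ^ 3 := by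
    rw [hg']
    field_simp [hr0.ne']
  have key1 : r₀⁻¹ * a' + g' * a₀ = b₀ * (-D) / r₀ ^ 3 := by
    have step : r₀⁻¹ * a' + -(a' * a₀ + b' * b₀) / r₀ ^ 3 * a₀ =
        (a' * r₀ ^ 2 - (a' * a₀ + b' * b₀) * a₀) / r₀ ^ 3 := by
      field_simp [hr0.ne']
      ring
    rw [key, step, hr2, hD]; ring
  have key2 : r₀⁻¹ * b' + g' * b₀ = a₀ * D / r₀ ^ 3 := by
    have step : r₀⁻¹ * b' + -(a' * a₀ + b' * b₀) / r₀ ^ 3 * b₀ =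
        (b' * r₀ ^ 2 - (a' * a₀ + b' * b₀) * b₀) / r₀ ^ 3 := by
      field_simp [hr0.ne']
      ring
    rw [key, step, hr2, hD]; ring
  have hval : (Real.sqrt ((dx1 φ t₀ x₁ x₂) ^ 2 + (dx2 φ t₀ x₁ x₂) ^ 2))⁻¹ • ((a', b') : ℝ × ℝ)
      + g' • ((dx1 φ t₀ x₁ x₂, dx2 φ t₀ x₁ x₂) : ℝ × ℝ)
      = ((b₀ * (-D) / r₀ ^ 3, a₀ * D / r₀ ^ 3) : ℝ × ℝ) := by
    rw [Prod.ext_iff]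
    constructor
    · exact key1
    · exact key2
  rw [hval]
  have hr3 : r₀ ^ 3 ≠ 0 := pow_ne_zero _ hr0.ne'
  constructor
  · intro hv hD0
    apply hv
    rw [hD0]
    simp [Prod.ext_iff]
  · intro hDne hv
    rw [Prod.ext_iff] at hv
    simp only [Prod.fst_zero, Prod.snd_zero, div_eq_zero_iff] at hv
    obtain ⟨h1, h2⟩ := hv
    rcases hab with h | h
    · rcases h2 with h2 | h2
      · rcases mul_eq_zero.1 h2 with h' | h'
        · exact h h'
        · exact hDne h'
      · exact hr3 h2
    · rcases h1 with h1 | h1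
      · rcases mul_eq_zero.1 h1 with h' | h'
        · exact h h'
        · exact hDne (by linarith)
      · exact hr3 h1
end

section
/- Let φ : ℝ × ℝ² → ℝ be C² on a neighborhood of (t₀, x₀), let θ₀ = (θ₀¹, θ₀²) ∈ ℝ² with θ₀¹ > 0, and set t₀ = arctan(θ₀²/θ₀¹). For j = 1, 2 define Fⱼ on {θ ∈ ℝ² : θ¹ > 0} by Fⱼ(θ) = √((θ¹)² + (θ²)²) · (∂φ/∂xʲ)(arctan(θ²/θ¹), x₀); these are the mixed partials ∂ϕ/∂xʲ of the homogeneous degree-one extension ϕ(x,θ) = |θ|·φ(arg θ, x). Then the 2×2 matrix with entries Mᵢⱼ = ∂Fⱼ/∂θⁱ(θ₀) (i, j = 1, 2) is invertible (det M ≠ 0) if and only if h(t₀, x₀) ≠ 0. (Proposition 3.1.) -/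
/-- F_j(θ) = |θ| · ∂φ/∂xʲ(arctan(θ²/θ¹), x₀) on the right half plane:
the mixed partial ∂ϕ/∂xʲ of the homogeneous degree-one extension. -/
noncomputable def Fj (φ : ℝ → ℝ → ℝ → ℝ) (x₁ x₂ : ℝ)
    (dxj : (ℝ → ℝ → ℝ → ℝ) → ℝ → ℝ → ℝ → ℝ) (θ : ℝ × ℝ) : ℝ :=
  Real.sqrt (θ.1 ^ 2 + θ.2 ^ 2) * dxj φ (Real.arctan (θ.2 / θ.1)) x₁ x₂

/-- Proposition 3.1: the matrix Mᵢⱼ = ∂Fⱼ/∂θⁱ(θ₀) is invertible iff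
the local Bolker condition h(t₀,x₀) ≠ 0 holds. -/
theorem stmt1 (φ : ℝ → ℝ → ℝ → ℝ) (x₁ x₂ θ₁ θ₂ t₀ : ℝ) (hθ : 0 < θ₁)
    (ht₀ : t₀ = Real.arctan (θ₂ / θ₁))
    (hφ : ContDiffAt ℝ 2 (fun p : ℝ × ℝ × ℝ => φ p.1 p.2.1 p.2.2) (t₀, x₁, x₂)) :
    (Matrix.det
      !![deriv (fun a => Fj φ x₁ x₂ dx1 (a, θ₂)) θ₁,
           deriv (fun a => Fj φ x₁ x₂ dx2 (a, θ₂)) θ₁;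
         deriv (fun b => Fj φ x₁ x₂ dx1 (θ₁, b)) θ₂,
           deriv (fun b => Fj φ x₁ x₂ dx2 (θ₁, b)) θ₂] ≠ 0) ↔
      bolker φ t₀ x₁ x₂ ≠ 0 := by
  set Φ : ℝ × ℝ × ℝ → ℝ := fun p => φ p.1 p.2.1 p.2.2 with hΦdef
  -- get an open neighborhood where Φ is C²
  obtain ⟨u, hu, hΦu⟩ := hφ.contDiffOn le_rfl (by norm_num)
  obtain ⟨V, hVu, hVo, hpV⟩ := mem_nhds_iff.mp hu
  have hΦ : ContDiffOn ℝ 2 Φ V := hΦu.mono hVu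
  have hD : ContDiffOn ℝ 1 (fderiv ℝ Φ) V := hΦ.fderiv_of_isOpen hVo (by norm_num)
  have hline : DifferentiableAt ℝ (fun t : ℝ => ((t, x₁, x₂) : ℝ × ℝ × ℝ)) t₀ :=
    differentiableAt_id.prodMk (differentiableAt_const _)
  have hDat : DifferentiableAt ℝ (fderiv ℝ Φ) (t₀, x₁, x₂) :=
    ((hD.differentiableOn one_ne_zero).differentiableAt (hVo.mem_nhds hpV))
  have hmem : ∀ᶠ t in nhds t₀, ((t, x₁, x₂) : ℝ × ℝ × ℝ) ∈ V := by
    have hc : ContinuousAt (fun t : ℝ => ((t, x₁, x₂) : ℝ × ℝ × ℝ)) t₀ := hline.continuousAt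
    exact hc.preimage_mem_nhds (hVo.mem_nhds hpV)
  -- the two spatial partials as functions of t agree near t₀ with fderiv applied to vectors
  have key : ∀ (v : ℝ × ℝ × ℝ)
      (g : ℝ → ℝ)
      (hg : ∀ t, ((t, x₁, x₂) : ℝ × ℝ × ℝ) ∈ V →
        g t = fderiv ℝ Φ (t, x₁, x₂) v),
      DifferentiableAt ℝ g t₀ := by
    intro v g hg
    have hsm : DifferentiableAt ℝ (fun t : ℝ => fderiv ℝ Φ (t, x₁, x₂) v) t₀ :=
      (hDat.comp t₀ hline).clm_apply (differentiableAt_const _)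
    have heq : g =ᶠ[nhds t₀] fun t => fderiv ℝ Φ (t, x₁, x₂) v :=
      hmem.mono fun t ht => hg t ht
    exact (heq.differentiableAt_iff).mpr hsm
  have hg1eq : ∀ t, ((t, x₁, x₂) : ℝ × ℝ × ℝ) ∈ V →
      dx1 φ t x₁ x₂ = fderiv ℝ Φ (t, x₁, x₂) ((0 : ℝ), (1 : ℝ), (0 : ℝ)) := by
    intro t ht
    have hΦd : DifferentiableAt ℝ Φ (t, x₁, x₂) :=
      (hΦ.differentiableOn (by norm_num)).differentiableAt (hVo.mem_nhds ht)
    have hl : HasDerivAt (fun y : ℝ => ((t, y, x₂) : ℝ × ℝ × ℝ)) ((0 : ℝ), (1 : ℝ), (0 : ℝ)) x₁ :=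
      (hasDerivAt_const x₁ t).prodMk ((hasDerivAt_id x₁).prodMk (hasDerivAt_const x₁ x₂))
    have := hΦd.hasFDerivAt.comp_hasDerivAt x₁ hl
    exact this.deriv
  have hg2eq : ∀ t, ((t, x₁, x₂) : ℝ × ℝ × ℝ) ∈ V →
      dx2 φ t x₁ x₂ = fderiv ℝ Φ (t, x₁, x₂) ((0 : ℝ), (0 : ℝ), (1 : ℝ)) := by
    intro t ht
    have hΦd : DifferentiableAt ℝ Φ (t, x₁, x₂) :=
      (hΦ.differentiableOn (by norm_num)).differentiableAt (hVo.mem_nhds ht)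
    have hl : HasDerivAt (fun y : ℝ => ((t, x₁, y) : ℝ × ℝ × ℝ)) ((0 : ℝ), (0 : ℝ), (1 : ℝ)) x₂ :=
      (hasDerivAt_const x₂ t).prodMk ((hasDerivAt_const x₂ x₁).prodMk (hasDerivAt_id x₂))
    have := hΦd.hasFDerivAt.comp_hasDerivAt x₂ hl
    exact this.deriv
  have hd1 : DifferentiableAt ℝ (fun s => dx1 φ s x₁ x₂) t₀ := key _ _ hg1eq
  have hd2 : DifferentiableAt ℝ (fun s => dx2 φ s x₁ x₂) t₀ := key _ _ hg2eq
  set c₁ := deriv (fun s => dx1 φ s x₁ x₂) t₀ with hc₁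
  set c₂ := deriv (fun s => dx2 φ s x₁ x₂) t₀ with hc₂
  have hg1 : HasDerivAt (fun s => dx1 φ s x₁ x₂) c₁ t₀ := hd1.hasDerivAt
  have hg2 : HasDerivAt (fun s => dx2 φ s x₁ x₂) c₂ t₀ := hd2.hasDerivAt
  subst ht₀
  -- now compute the four entries
  have hn : (0 : ℝ) < θ₁ ^ 2 + θ₂ ^ 2 := by positivity
  set n := θ₁ ^ 2 + θ₂ ^ 2 with hndef
  set r := Real.sqrt n with hrdef
  have hr : 0 < r := Real.sqrt_pos.mpr hn
  have hr2 : r ^ 2 = n := Real.sq_sqrt hn.le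
  -- derivative of a ↦ √(a² + θ₂²) at θ₁
  have hsq1 : HasDerivAt (fun a : ℝ => Real.sqrt (a ^ 2 + θ₂ ^ 2)) (θ₁ / r) θ₁ := by
    have hin : HasDerivAt (fun a : ℝ => a ^ 2 + θ₂ ^ 2) (2 * θ₁) θ₁ := by
      simpa using (hasDerivAt_pow 2 θ₁).add_const (θ₂ ^ 2)
    have := (Real.hasDerivAt_sqrt hn.ne').comp θ₁ hin
    refine this.congr_deriv ?_
    field_simp
    ring
  have hsq2 : HasDerivAt (fun b : ℝ => Real.sqrt (θ₁ ^ 2 + b ^ 2)) (θ₂ / r) θ₂ := by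
    have hin : HasDerivAt (fun b : ℝ => θ₁ ^ 2 + b ^ 2) (2 * θ₂) θ₂ := by
      simpa using ((hasDerivAt_pow 2 θ₂).const_add (θ₁ ^ 2))
    have := (Real.hasDerivAt_sqrt hn.ne').comp θ₂ hin
    refine this.congr_deriv ?_
    field_simp
    ring
  -- derivative of a ↦ arctan (θ₂ / a) at θ₁
  have harc1 : HasDerivAt (fun a : ℝ => Real.arctan (θ₂ / a)) (-θ₂ / n) θ₁ := by
    have hdiv : HasDerivAt (fun a : ℝ => θ₂ / a) (-θ₂ / θ₁ ^ 2) θ₁ := by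
      simpa [Pi.div_def] using (hasDerivAt_const θ₁ θ₂).div (hasDerivAt_id' θ₁) hθ.ne'
    have := (Real.hasDerivAt_arctan (θ₂ / θ₁)).comp θ₁ hdiv
    refine this.congr_deriv ?_
    rw [hndef]
    field_simp
  have harc2 : HasDerivAt (fun b : ℝ => Real.arctan (b / θ₁)) (θ₁ / n) θ₂ := by
    have hdiv : HasDerivAt (fun b : ℝ => b / θ₁) (1 / θ₁) θ₂ := by
      simpa using (hasDerivAt_id θ₂).div_const θ₁
    have := (Real.hasDerivAt_arctan (θ₂ / θ₁)).comp θ₂ hdiv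
    refine this.congr_deriv ?_
    rw [hndef]
    field_simp
  -- four entries
  have e11 : deriv (fun a => Fj φ x₁ x₂ dx1 (a, θ₂)) θ₁ =
      (θ₁ * dx1 φ (Real.arctan (θ₂ / θ₁)) x₁ x₂ - θ₂ * c₁) / r := by
    have h := hsq1.mul ((hg1.comp θ₁ harc1))
    have h2 : deriv (fun a => Fj φ x₁ x₂ dx1 (a, θ₂)) θ₁ =
        θ₁ / r * dx1 φ (Real.arctan (θ₂ / θ₁)) x₁ x₂ + r * (c₁ * (-θ₂ / n)) := by
      exact h.deriv
    rw [h2, ← hr2]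
    field_simp
    ring
  have e12 : deriv (fun a => Fj φ x₁ x₂ dx2 (a, θ₂)) θ₁ =
      (θ₁ * dx2 φ (Real.arctan (θ₂ / θ₁)) x₁ x₂ - θ₂ * c₂) / r := by
    have h := hsq1.mul ((hg2.comp θ₁ harc1))
    have h2 : deriv (fun a => Fj φ x₁ x₂ dx2 (a, θ₂)) θ₁ =
        θ₁ / r * dx2 φ (Real.arctan (θ₂ / θ₁)) x₁ x₂ + r * (c₂ * (-θ₂ / n)) := by
      exact h.deriv
    rw [h2, ← hr2]
    field_simp
    ring
  have e21 : deriv (fun b => Fj φ x₁ x₂ dx1 (θ₁, b)) θ₂ =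
      (θ₂ * dx1 φ (Real.arctan (θ₂ / θ₁)) x₁ x₂ + θ₁ * c₁) / r := by
    have h := hsq2.mul ((hg1.comp θ₂ harc2))
    have h2 : deriv (fun b => Fj φ x₁ x₂ dx1 (θ₁, b)) θ₂ =
        θ₂ / r * dx1 φ (Real.arctan (θ₂ / θ₁)) x₁ x₂ + r * (c₁ * (θ₁ / n)) := by
      exact h.deriv
    rw [h2, ← hr2]
    field_simp
  have e22 : deriv (fun b => Fj φ x₁ x₂ dx2 (θ₁, b)) θ₂ =
      (θ₂ * dx2 φ (Real.arctan (θ₂ / θ₁)) x₁ x₂ + θ₁ * c₂) / r := by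
    have h := hsq2.mul ((hg2.comp θ₂ harc2))
    have h2 : deriv (fun b => Fj φ x₁ x₂ dx2 (θ₁, b)) θ₂ =
        θ₂ / r * dx2 φ (Real.arctan (θ₂ / θ₁)) x₁ x₂ + r * (c₂ * (θ₁ / n)) := by
      exact h.deriv
    rw [h2, ← hr2]
    field_simp
  rw [Matrix.det_fin_two_of, e11, e12, e21, e22]
  have hdet :
      (θ₁ * dx1 φ (Real.arctan (θ₂ / θ₁)) x₁ x₂ - θ₂ * c₁) / r *
          ((θ₂ * dx2 φ (Real.arctan (θ₂ / θ₁)) x₁ x₂ + θ₁ * c₂) / r) -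
        (θ₁ * dx2 φ (Real.arctan (θ₂ / θ₁)) x₁ x₂ - θ₂ * c₂) / r *
          ((θ₂ * dx1 φ (Real.arctan (θ₂ / θ₁)) x₁ x₂ + θ₁ * c₁) / r) =
        bolker φ (Real.arctan (θ₂ / θ₁)) x₁ x₂ := by
    rw [bolker, ← hc₁, ← hc₂]
    have hrn : r ^ 2 = θ₁ ^ 2 + θ₂ ^ 2 := hr2.trans hndef
    field_simp
    linear_combination (dx2 φ (Real.arctan (θ₂ / θ₁)) x₁ x₂ * c₁ -
      dx1 φ (Real.arctan (θ₂ / θ₁)) x₁ x₂ * c₂) * hrn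
  rw [hdet]
end

section
/- Let φ : ℝ × ℝ² → ℝ be C² on a neighborhood of (t₀, x₀), let σ₀ ≠ 0, and assume h(t₀, x₀) ≠ 0. Define Π_Y : ℝ × ℝ² × ℝ → ℝ⁴ by Π_Y(t, x, σ) = (φ(t,x), t, σ, −σ·∂ₜφ(t,x)). Then Π_Y is a local diffeomorphism at p = (t₀, x₀, σ₀): there exist open sets U ∋ p and V ∋ Π_Y(p) such that Π_Y maps U bijectively onto V and the inverse map V → U is continuously differentiable. (Part of Lemma 4.3: the measurement-side projection of the canonical relation is a local diffeomorphism.) -/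
open Topology Filter


/-- Time partial derivative ∂ₜφ. -/
noncomputable def dt (φ : ℝ → ℝ → ℝ → ℝ) (t x₁ x₂ : ℝ) : ℝ :=
  deriv (fun s => φ s x₁ x₂) t

/-- The measurement-side projection Π_Y(t, x, σ) = (φ(t,x), t, σ, −σ·∂ₜφ(t,x)),
with (t, x¹, x², σ) ∈ ℝ × ℝ² × ℝ ≅ ℝ⁴. -/
noncomputable def PiY (φ : ℝ → ℝ → ℝ → ℝ) (p : ℝ × ℝ × ℝ × ℝ) : ℝ × ℝ × ℝ × ℝ :=
  (φ p.1 p.2.1 p.2.2.1, p.1, p.2.2.2, -p.2.2.2 * dt φ p.1 p.2.1 p.2.2.1)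

/-- Lemma 4.3 (measurement side): under the local Bolker condition, Π_Y is a
local diffeomorphism at (t₀, x₀, σ₀) for σ₀ ≠ 0. -/
theorem stmt5 (φ : ℝ → ℝ → ℝ → ℝ) (t₀ x₁ x₂ σ₀ : ℝ)
    (hφ : ContDiffAt ℝ 2 (fun p : ℝ × ℝ × ℝ => φ p.1 p.2.1 p.2.2) (t₀, x₁, x₂))
    (hσ : σ₀ ≠ 0) (hB : bolker φ t₀ x₁ x₂ ≠ 0) :
    ∃ (U V : Set (ℝ × ℝ × ℝ × ℝ)) (g : ℝ × ℝ × ℝ × ℝ → ℝ × ℝ × ℝ × ℝ),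
      IsOpen U ∧ IsOpen V ∧ (t₀, x₁, x₂, σ₀) ∈ U ∧ PiY φ (t₀, x₁, x₂, σ₀) ∈ V ∧
      Set.BijOn (PiY φ) U V ∧ ContDiffOn ℝ 1 g V ∧
      (∀ q ∈ U, g (PiY φ q) = q) ∧ (∀ y ∈ V, PiY φ (g y) = y) := by
  classical
  set Φ : ℝ × ℝ × ℝ → ℝ := fun p => φ p.1 p.2.1 p.2.2 with hΦdef
  set q₀ : ℝ × ℝ × ℝ := (t₀, x₁, x₂) with hq₀def
  set p₀ : ℝ × ℝ × ℝ × ℝ := (t₀, x₁, x₂, σ₀) with hp₀def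
  obtain ⟨s₀, hs₀, hΦs₀⟩ := hφ.contDiffOn le_rfl (by simp)
  set s : Set (ℝ × ℝ × ℝ) := interior s₀ with hsdef
  have hs_open : IsOpen s := isOpen_interior
  have hq₀s : q₀ ∈ s := mem_interior_iff_mem_nhds.2 hs₀
  have hΦs : ContDiffOn ℝ 2 Φ s := hΦs₀.mono interior_subset
  set L : (ℝ × ℝ × ℝ) → (ℝ × ℝ × ℝ) →L[ℝ] ℝ := fderiv ℝ Φ with hLdef
  have hL : ContDiffOn ℝ 1 L s := hΦs.fderiv_of_isOpen hs_open (by norm_num)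
  have hΦdiff : ∀ q ∈ s, HasFDerivAt Φ (L q) q := fun q hq =>
    ((hΦs.differentiableOn (by norm_num)).differentiableAt (hs_open.mem_nhds hq)).hasFDerivAt
  have hLdiff : DifferentiableAt ℝ L q₀ :=
    (hL.differentiableOn (by norm_num)).differentiableAt (hs_open.mem_nhds hq₀s)
  set H := fderiv ℝ L q₀ with hHdef
  have hLH : HasFDerivAt L H q₀ := hLdiff.hasFDerivAt
  have Hsymm : ∀ v w, H v w = H w v := fun v w =>
    second_derivative_symmetric_of_eventually
      (Filter.eventually_iff_exists_mem.2 ⟨s, hs_open.mem_nhds hq₀s, hΦdiff⟩) hLH v w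
  -- partial derivatives in terms of L
  have hdt_eq : ∀ q ∈ s, dt φ q.1 q.2.1 q.2.2 = L q (1, 0, 0) := by
    intro q hq
    have hcurve : HasDerivAt (fun τ : ℝ => ((τ, q.2.1, q.2.2) : ℝ × ℝ × ℝ)) (1, 0, 0) q.1 :=
      (hasDerivAt_id q.1).prodMk ((hasDerivAt_const _ _).prodMk (hasDerivAt_const _ _))
    have h2 : HasDerivAt (fun τ : ℝ => φ τ q.2.1 q.2.2) (L q (1, 0, 0)) q.1 := by
      have := (hΦdiff q hq).comp_hasDerivAt q.1 (by simpa using hcurve)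
      exact this
    exact h2.deriv
  have hdx1_eq : ∀ q ∈ s, dx1 φ q.1 q.2.1 q.2.2 = L q (0, 1, 0) := by
    intro q hq
    have hcurve : HasDerivAt (fun y : ℝ => ((q.1, y, q.2.2) : ℝ × ℝ × ℝ)) (0, 1, 0) q.2.1 :=
      (hasDerivAt_const _ _).prodMk ((hasDerivAt_id _).prodMk (hasDerivAt_const _ _))
    have h2 : HasDerivAt (fun y : ℝ => φ q.1 y q.2.2) (L q (0, 1, 0)) q.2.1 := by
      have := (hΦdiff q hq).comp_hasDerivAt q.2.1 (by simpa using hcurve)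
      exact this
    exact h2.deriv
  have hdx2_eq : ∀ q ∈ s, dx2 φ q.1 q.2.1 q.2.2 = L q (0, 0, 1) := by
    intro q hq
    have hcurve : HasDerivAt (fun y : ℝ => ((q.1, q.2.1, y) : ℝ × ℝ × ℝ)) (0, 0, 1) q.2.2 :=
      (hasDerivAt_const _ _).prodMk ((hasDerivAt_const _ _).prodMk (hasDerivAt_id _))
    have h2 : HasDerivAt (fun y : ℝ => φ q.1 q.2.1 y) (L q (0, 0, 1)) q.2.2 := by
      have := (hΦdiff q hq).comp_hasDerivAt q.2.2 (by simpa using hcurve)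
      exact this
    exact h2.deriv
  -- the t-line through q₀
  have hlinecurve : HasDerivAt (fun τ : ℝ => ((τ, x₁, x₂) : ℝ × ℝ × ℝ)) (1, 0, 0) t₀ :=
    (hasDerivAt_id t₀).prodMk ((hasDerivAt_const _ _).prodMk (hasDerivAt_const _ _))
  have hline : ∀ᶠ τ in 𝓝 t₀, ((τ, x₁, x₂) : ℝ × ℝ × ℝ) ∈ s := by
    have hc : ContinuousAt (fun τ : ℝ => ((τ, x₁, x₂) : ℝ × ℝ × ℝ)) t₀ := by fun_prop
    exact hc (hs_open.mem_nhds hq₀s)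
  have hLline : HasDerivAt (fun τ : ℝ => L (τ, x₁, x₂)) (H (1, 0, 0)) t₀ := by
    have := hLH.comp_hasDerivAt t₀ hlinecurve
    exact this
  have hd2 : ∀ v : ℝ × ℝ × ℝ,
      HasDerivAt (fun τ : ℝ => L (τ, x₁, x₂) v) (H (1, 0, 0) v) t₀ := fun v => by
    have := (ContinuousLinearMap.apply ℝ ℝ v).hasFDerivAt.comp_hasDerivAt t₀ hLline
    exact this
  have hderivdx2 : deriv (fun τ => dx2 φ τ x₁ x₂) t₀ = H (1, 0, 0) (0, 0, 1) := by
    have heq : (fun τ => dx2 φ τ x₁ x₂) =ᶠ[𝓝 t₀] fun τ => L (τ, x₁, x₂) (0, 0, 1) := by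
      filter_upwards [hline] with τ hτ
      exact hdx2_eq (τ, x₁, x₂) hτ
    rw [heq.deriv_eq]
    exact (hd2 (0, 0, 1)).deriv
  have hderivdx1 : deriv (fun τ => dx1 φ τ x₁ x₂) t₀ = H (1, 0, 0) (0, 1, 0) := by
    have heq : (fun τ => dx1 φ τ x₁ x₂) =ᶠ[𝓝 t₀] fun τ => L (τ, x₁, x₂) (0, 1, 0) := by
      filter_upwards [hline] with τ hτ
      exact hdx1_eq (τ, x₁, x₂) hτ
    rw [heq.deriv_eq]
    exact (hd2 (0, 1, 0)).deriv
  have hbolker : bolker φ t₀ x₁ x₂ =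
      L q₀ (0, 1, 0) * H (0, 0, 1) (1, 0, 0) - L q₀ (0, 0, 1) * H (0, 1, 0) (1, 0, 0) := by
    have h1 : dx1 φ t₀ x₁ x₂ = L q₀ (0, 1, 0) := hdx1_eq q₀ hq₀s
    have h2 : dx2 φ t₀ x₁ x₂ = L q₀ (0, 0, 1) := hdx2_eq q₀ hq₀s
    unfold bolker
    rw [hderivdx2, hderivdx1, h1, h2, Hsymm (1, 0, 0) (0, 0, 1), Hsymm (1, 0, 0) (0, 1, 0)]
  -- projection ℝ⁴ → ℝ³
  set π : (ℝ × ℝ × ℝ × ℝ) →L[ℝ] ℝ × ℝ × ℝ :=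
    (ContinuousLinearMap.fst ℝ ℝ (ℝ × ℝ × ℝ)).prod
      (((ContinuousLinearMap.fst ℝ ℝ (ℝ × ℝ)).prod
        ((ContinuousLinearMap.fst ℝ ℝ ℝ).comp (ContinuousLinearMap.snd ℝ ℝ (ℝ × ℝ)))).comp
        (ContinuousLinearMap.snd ℝ ℝ (ℝ × ℝ × ℝ))) with hπdef
  have hπ : ∀ p : ℝ × ℝ × ℝ × ℝ, π p = (p.1, p.2.1, p.2.2.1) := fun p => rfl
  set τ₄ : (ℝ × ℝ × ℝ × ℝ) →L[ℝ] ℝ :=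
    (ContinuousLinearMap.snd ℝ ℝ ℝ).comp
      ((ContinuousLinearMap.snd ℝ ℝ (ℝ × ℝ)).comp
        (ContinuousLinearMap.snd ℝ ℝ (ℝ × ℝ × ℝ))) with hτ₄def
  have hτ₄ : ∀ p : ℝ × ℝ × ℝ × ℝ, τ₄ p = p.2.2.2 := fun p => rfl
  have hπp₀ : π p₀ = q₀ := rfl
  -- the smooth model F
  set et : ℝ × ℝ × ℝ := (1, 0, 0) with hetdef
  set F : (ℝ × ℝ × ℝ × ℝ) → ℝ × ℝ × ℝ × ℝ :=
    fun p => (Φ (π p), p.1, p.2.2.2, -p.2.2.2 * L (π p) et) with hFdef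
  have hFeq : PiY φ =ᶠ[𝓝 p₀] F := by
    have hc : ContinuousAt (fun p : ℝ × ℝ × ℝ × ℝ => π p) p₀ := π.continuous.continuousAt
    filter_upwards [hc (show s ∈ 𝓝 (π p₀) from hs_open.mem_nhds hq₀s)] with p hp
    have := hdt_eq (π p) hp
    simp only [hπ] at this hp ⊢
    simp only [PiY, hFdef, hπ, this, hΦdef]
  -- ContDiffAt of F
  have hLq₀nhds := hs_open.mem_nhds hq₀s
  have hKc : ContDiffAt ℝ 1 (fun q => L q et) q₀ :=
    (hL.contDiffAt hLq₀nhds).clm_apply contDiffAt_const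
  have hπc : ContDiffAt ℝ 1 (fun p : ℝ × ℝ × ℝ × ℝ => π p) p₀ := π.contDiff.contDiffAt
  have hΦc : ContDiffAt ℝ 1 Φ q₀ := (hΦs.contDiffAt hLq₀nhds).of_le one_le_two
  have hF1 : ContDiffAt ℝ 1 (fun p : ℝ × ℝ × ℝ × ℝ => Φ (π p)) p₀ := (hΦc.comp p₀ hπc :)
  have hF4 : ContDiffAt ℝ 1 (fun p : ℝ × ℝ × ℝ × ℝ => -p.2.2.2 * L (π p) et) p₀ := by
    have h3 : ContDiffAt ℝ 1 (fun p : ℝ × ℝ × ℝ × ℝ => -p.2.2.2) p₀ := by fun_prop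
    exact h3.mul (hKc.comp p₀ hπc :)
  have hFc : ContDiffAt ℝ 1 F p₀ := by
    refine hF1.prodMk (ContDiffAt.prodMk (by fun_prop) (ContDiffAt.prodMk (by fun_prop) hF4))
  -- explicit derivative of F
  have h1 : HasFDerivAt (fun p : ℝ × ℝ × ℝ × ℝ => Φ (π p)) ((L q₀).comp π) p₀ :=
    ((hΦdiff q₀ hq₀s).comp p₀ π.hasFDerivAt :)
  have h2 : HasFDerivAt (fun p : ℝ × ℝ × ℝ × ℝ => p.1)
      (ContinuousLinearMap.fst ℝ ℝ (ℝ × ℝ × ℝ)) p₀ :=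
    (ContinuousLinearMap.fst ℝ ℝ (ℝ × ℝ × ℝ)).hasFDerivAt
  have h3 : HasFDerivAt (fun p : ℝ × ℝ × ℝ × ℝ => p.2.2.2) τ₄ p₀ := τ₄.hasFDerivAt
  have hK4 : HasFDerivAt (fun p : ℝ × ℝ × ℝ × ℝ => L (π p) et)
      ((((ContinuousLinearMap.apply ℝ ℝ et).comp H).comp π)) p₀ := by
    have hq : HasFDerivAt (fun q => L q et) ((ContinuousLinearMap.apply ℝ ℝ et).comp H) q₀ :=
      (ContinuousLinearMap.apply ℝ ℝ et).hasFDerivAt.comp q₀ hLH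
    exact hq.comp p₀ π.hasFDerivAt
  have h4 := (h3.neg.mul hK4 :)
  have hA := (h1.prodMk (h2.prodMk (h3.prodMk h4)) :)
  set A := (((L q₀).comp π).prod
    ((ContinuousLinearMap.fst ℝ ℝ (ℝ × ℝ × ℝ)).prod
      (τ₄.prod ((-p₀.2.2.2) • ((((ContinuousLinearMap.apply ℝ ℝ et).comp H).comp π)) +
        L (π p₀) et • -τ₄)))) with hAdef
  have hAF : HasFDerivAt F A p₀ := hA
  -- nondegeneracy
  have hBol' : L q₀ (0, 1, 0) * H (0, 0, 1) et - L q₀ (0, 0, 1) * H (0, 1, 0) et ≠ 0 := by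
    simpa [hetdef] using (hbolker ▸ hB)
  have hzero : ∀ v : ℝ × ℝ × ℝ × ℝ, A v = 0 → v = 0 := by
    intro v hv
    rw [hAdef] at hv
    simp only [ContinuousLinearMap.prod_apply, ContinuousLinearMap.comp_apply,
      ContinuousLinearMap.add_apply, ContinuousLinearMap.smul_apply,
      ContinuousLinearMap.neg_apply, ContinuousLinearMap.coe_fst',
      ContinuousLinearMap.apply_apply, hπ, hτ₄, hp₀def, Prod.mk_eq_zero,
      smul_eq_mul] at hv
    obtain ⟨e1eq, e2eq, e3eq, e4eq⟩ := hv
    rw [e2eq] at e1eq e4eq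
    rw [e3eq] at e4eq
    have hsplit : ((0 : ℝ), v.2.1, v.2.2.1) =
        v.2.1 • ((0 : ℝ), (1 : ℝ), (0 : ℝ)) + v.2.2.1 • ((0 : ℝ), (0 : ℝ), (1 : ℝ)) := by
      simp [Prod.ext_iff]
    have eqa : v.2.1 * L q₀ (0, 1, 0) + v.2.2.1 * L q₀ (0, 0, 1) = 0 := by
      have e1' : v.2.1 • L q₀ (0, 1, 0) + v.2.2.1 • L q₀ (0, 0, 1) = 0 := by
        rw [← map_smul, ← map_smul, ← map_add, ← hsplit]; exact e1eq
      simpa [smul_eq_mul] using e1'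
    have eqb : v.2.1 * H (0, 1, 0) et + v.2.2.1 * H (0, 0, 1) et = 0 := by
      have h0 : H ((0 : ℝ), v.2.1, v.2.2.1) et = 0 := by
        have h := e4eq
        simp only [neg_zero, mul_zero, add_zero, neg_mul, neg_eq_zero] at h
        exact (mul_eq_zero.1 h).resolve_left hσ
      have hH : H ((0 : ℝ), v.2.1, v.2.2.1) =
          v.2.1 • H (0, 1, 0) + v.2.2.1 • H (0, 0, 1) := by
        rw [hsplit, map_add, map_smul, map_smul]
      rw [hH] at h0
      simpa [ContinuousLinearMap.add_apply, ContinuousLinearMap.coe_smul',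
        Pi.smul_apply, smul_eq_mul] using h0
    have hb : v.2.1 = 0 := by
      have key : v.2.1 *
          (L q₀ (0, 1, 0) * H (0, 0, 1) et - L q₀ (0, 0, 1) * H (0, 1, 0) et) = 0 := by
        linear_combination (H (0, 0, 1) et) * eqa - (L q₀ (0, 0, 1)) * eqb
      rcases mul_eq_zero.1 key with h | h
      · exact h
      · exact absurd h hBol'
    have hcc : v.2.2.1 = 0 := by
      have key : v.2.2.1 *
          (L q₀ (0, 1, 0) * H (0, 0, 1) et - L q₀ (0, 0, 1) * H (0, 1, 0) et) = 0 := by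
        linear_combination (L q₀ (0, 1, 0)) * eqb - (H (0, 1, 0) et) * eqa
      rcases mul_eq_zero.1 key with h | h
      · exact h
      · exact absurd h hBol'
    simp [Prod.ext_iff, e2eq, e3eq, hb, hcc]
  have hinj : Function.Injective A := by
    intro u v huv
    have h0 : A (u - v) = 0 := by rw [map_sub, huv, sub_self]
    exact sub_eq_zero.1 (hzero _ h0)
  have hsurj : Function.Surjective A :=
    (LinearMap.injective_iff_surjective
      (f := (A : (ℝ × ℝ × ℝ × ℝ) →ₗ[ℝ] ℝ × ℝ × ℝ × ℝ))).1 hinj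
  set Aeq : (ℝ × ℝ × ℝ × ℝ) ≃L[ℝ] ℝ × ℝ × ℝ × ℝ :=
    LinearEquiv.toContinuousLinearEquiv
      (LinearEquiv.ofBijective (A : (ℝ × ℝ × ℝ × ℝ) →ₗ[ℝ] ℝ × ℝ × ℝ × ℝ) ⟨hinj, hsurj⟩)
    with hAeqdef
  have hAeqcoe : (Aeq : (ℝ × ℝ × ℝ × ℝ) →L[ℝ] ℝ × ℝ × ℝ × ℝ) = A :=
    ContinuousLinearMap.ext fun v => rfl
  -- transfer to PiY
  have hPc : ContDiffAt ℝ 1 (PiY φ) p₀ := hFc.congr_of_eventuallyEq hFeq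
  have hP' : HasFDerivAt (PiY φ)
      ((Aeq : (ℝ × ℝ × ℝ × ℝ) →L[ℝ] ℝ × ℝ × ℝ × ℝ)) p₀ := by
    rw [hAeqcoe]; exact hAF.congr_of_eventuallyEq hFeq
  -- inverse function theorem
  have hn : (1 : WithTop ℕ∞) ≠ 0 := one_ne_zero
  set e := hPc.toOpenPartialHomeomorph (PiY φ) hP' hn with hedef
  have hcoe : ⇑e = PiY φ := rfl
  have hsrc : p₀ ∈ e.source := hPc.mem_toOpenPartialHomeomorph_source hP' hn
  have htgt : PiY φ p₀ ∈ e.target := hPc.image_mem_toOpenPartialHomeomorph_target hP' hn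
  have hinvC : ContDiffAt ℝ 1 (hPc.localInverse hP' hn) (PiY φ p₀) :=
    hPc.to_localInverse hP' hn
  have hgsym : hPc.localInverse hP' hn = ⇑e.symm := rfl
  obtain ⟨w, hw, hgw⟩ := hinvC.contDiffOn le_rfl (by simp)
  set V : Set (ℝ × ℝ × ℝ × ℝ) := e.target ∩ interior w with hVdef
  have hVopen : IsOpen V := e.open_target.inter isOpen_interior
  set U : Set (ℝ × ℝ × ℝ × ℝ) := e.source ∩ PiY φ ⁻¹' V with hUdef
  have hUopen : IsOpen U := by
    have := e.isOpen_inter_preimage hVopen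
    rwa [hcoe] at this
  refine ⟨U, V, ⇑e.symm, hUopen, hVopen, ⟨hsrc, htgt, mem_interior_iff_mem_nhds.2 hw⟩,
    ⟨htgt, mem_interior_iff_mem_nhds.2 hw⟩, ⟨?_, ?_, ?_⟩, ?_, ?_, ?_⟩
  · exact fun p hp => hp.2
  · intro a ha b hb hab
    exact e.injOn ha.1 hb.1 (by rw [hcoe]; exact hab)
  · intro y hy
    refine ⟨e.symm y, ⟨e.map_target hy.1, ?_⟩, ?_⟩
    · show PiY φ (e.symm y) ∈ V
      rw [← hcoe, e.right_inv hy.1]; exact hy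
    · rw [← hcoe, e.right_inv hy.1]
  · rw [← hgsym]
    exact hgw.mono fun y hy => interior_subset hy.2
  · intro q hq
    rw [← hcoe]; exact e.left_inv hq.1
  · intro y hy
    rw [← hcoe]; exact e.right_inv hy.1
end

section
/- Let φ : ℝ × ℝ² → ℝ be C² on a neighborhood of (t₀, x₀), let σ₀ ≠ 0, and assume h(t₀, x₀) ≠ 0. Define Π_X : ℝ × ℝ² × ℝ → ℝ² × ℝ² ≅ ℝ⁴ by Π_X(t, x, σ) = (x, σ·∇ₓφ(t,x)). Then Π_X is a local diffeomorphism at p = (t₀, x₀, σ₀): there exist open sets U ∋ p and V ∋ Π_X(p) such that Π_X maps U bijectively onto V and the inverse map V → U is continuously differentiable. (Part of Lemma 4.3: the position-side projection of the canonical relation is a local diffeomorphism.) -/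
/-- The position-side projection Π_X(t, x, σ) = (x, σ·∇ₓφ(t,x)),
with (t, x¹, x², σ) ∈ ℝ × ℝ² × ℝ and values in ℝ² × ℝ² ≅ ℝ⁴. -/
noncomputable def PiX (φ : ℝ → ℝ → ℝ → ℝ) (p : ℝ × ℝ × ℝ × ℝ) : ℝ × ℝ × ℝ × ℝ :=
  (p.2.1, p.2.2.1, p.2.2.2 * dx1 φ p.1 p.2.1 p.2.2.1,
    p.2.2.2 * dx2 φ p.1 p.2.1 p.2.2.1)

/-- Lemma 4.3 (position side): under the local Bolker condition, Π_X is a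
local diffeomorphism at (t₀, x₀, σ₀) for σ₀ ≠ 0. -/
theorem stmt6 (φ : ℝ → ℝ → ℝ → ℝ) (t₀ x₁ x₂ σ₀ : ℝ)
    (hφ : ContDiffAt ℝ 2 (fun p : ℝ × ℝ × ℝ => φ p.1 p.2.1 p.2.2) (t₀, x₁, x₂))
    (hσ : σ₀ ≠ 0) (hB : bolker φ t₀ x₁ x₂ ≠ 0) :
    ∃ (U V : Set (ℝ × ℝ × ℝ × ℝ)) (g : ℝ × ℝ × ℝ × ℝ → ℝ × ℝ × ℝ × ℝ),
      IsOpen U ∧ IsOpen V ∧ (t₀, x₁, x₂, σ₀) ∈ U ∧ PiX φ (t₀, x₁, x₂, σ₀) ∈ V ∧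
      Set.BijOn (PiX φ) U V ∧ ContDiffOn ℝ 1 g V ∧
      (∀ q ∈ U, g (PiX φ q) = q) ∧ (∀ y ∈ V, PiX φ (g y) = y) := by
  classical
  set F : ℝ × ℝ × ℝ → ℝ := fun p => φ p.1 p.2.1 p.2.2 with hFdef
  have hev : ∀ᶠ q in nhds ((t₀, x₁, x₂) : ℝ × ℝ × ℝ), DifferentiableAt ℝ F q :=
    (hφ.eventually (by norm_num)).mono fun q hq => hq.differentiableAt (by norm_num)
  -- pointwise identification of dx1, dx2 with directional derivatives
  have key1 : ∀ t y z : ℝ, DifferentiableAt ℝ F (t, y, z) →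
      dx1 φ t y z = fderiv ℝ F (t, y, z) (0, 1, 0) := by
    intro t y z hp
    have hc : HasDerivAt (fun y' : ℝ => ((t, y', z) : ℝ × ℝ × ℝ)) (0, 1, 0) y :=
      (hasDerivAt_const _ _).prodMk ((hasDerivAt_id _).prodMk (hasDerivAt_const _ _))
    exact (hp.hasFDerivAt.comp_hasDerivAt y hc).deriv
  have key2 : ∀ t y z : ℝ, DifferentiableAt ℝ F (t, y, z) →
      dx2 φ t y z = fderiv ℝ F (t, y, z) (0, 0, 1) := by
    intro t y z hp
    have hc : HasDerivAt (fun z' : ℝ => ((t, y, z') : ℝ × ℝ × ℝ)) (0, 0, 1) z :=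
      (hasDerivAt_const _ _).prodMk ((hasDerivAt_const _ _).prodMk (hasDerivAt_id _))
    exact (hp.hasFDerivAt.comp_hasDerivAt z hc).deriv
  -- the spatial gradient map G
  set G : ℝ × ℝ × ℝ → ℝ × ℝ :=
    fun q => (fderiv ℝ F q (0, 1, 0), fderiv ℝ F q (0, 0, 1)) with hGdef
  have hDf : ContDiffAt ℝ 1 (fderiv ℝ F) (t₀, x₁, x₂) := hφ.fderiv_right (by norm_num)
  have hG : ContDiffAt ℝ 1 G (t₀, x₁, x₂) :=
    (((ContinuousLinearMap.apply ℝ ℝ (((0 : ℝ), (1 : ℝ), (0 : ℝ)))).contDiff.contDiffAt.comp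
        _ hDf).prodMk
      ((ContinuousLinearMap.apply ℝ ℝ (((0 : ℝ), (0 : ℝ), (1 : ℝ)))).contDiff.contDiffAt.comp
        _ hDf))
  set DG := fderiv ℝ G (t₀, x₁, x₂) with hDGdef
  have hGd : HasFDerivAt G DG (t₀, x₁, x₂) :=
    (hG.differentiableAt one_ne_zero).hasFDerivAt
  -- derivative of G along the t-line
  have hline : HasDerivAt (fun s : ℝ => ((s, x₁, x₂) : ℝ × ℝ × ℝ)) (1, 0, 0) t₀ :=
    (hasDerivAt_id _).prodMk ((hasDerivAt_const _ _).prodMk (hasDerivAt_const _ _))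
  have hGt : HasDerivAt (fun s : ℝ => G (s, x₁, x₂)) (DG (1, 0, 0)) t₀ :=
    hGd.comp_hasDerivAt t₀ hline
  have hGt1 : HasDerivAt (fun s : ℝ => (G (s, x₁, x₂)).1) (DG (1, 0, 0)).1 t₀ :=
    ((ContinuousLinearMap.fst ℝ ℝ ℝ).hasFDerivAt.comp_hasDerivAt t₀ hGt)
  have hGt2 : HasDerivAt (fun s : ℝ => (G (s, x₁, x₂)).2) (DG (1, 0, 0)).2 t₀ :=
    ((ContinuousLinearMap.snd ℝ ℝ ℝ).hasFDerivAt.comp_hasDerivAt t₀ hGt)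
  have hlinecont : Filter.Tendsto (fun s : ℝ => ((s, x₁, x₂) : ℝ × ℝ × ℝ)) (nhds t₀)
      (nhds (t₀, x₁, x₂)) := Continuous.tendsto (by fun_prop) t₀
  have hev_line : ∀ᶠ s in nhds t₀, DifferentiableAt ℝ F ((s, x₁, x₂) : ℝ × ℝ × ℝ) :=
    hlinecont.eventually hev
  have heq1 : (fun s => dx1 φ s x₁ x₂) =ᶠ[nhds t₀] fun s => (G (s, x₁, x₂)).1 :=
    hev_line.mono fun s hs => key1 s x₁ x₂ hs
  have heq2 : (fun s => dx2 φ s x₁ x₂) =ᶠ[nhds t₀] fun s => (G (s, x₁, x₂)).2 :=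
    hev_line.mono fun s hs => key2 s x₁ x₂ hs
  have ha' : deriv (fun s => dx1 φ s x₁ x₂) t₀ = (DG (1, 0, 0)).1 := by
    rw [heq1.deriv_eq]; exact hGt1.deriv
  have hd' : deriv (fun s => dx2 φ s x₁ x₂) t₀ = (DG (1, 0, 0)).2 := by
    rw [heq2.deriv_eq]; exact hGt2.deriv
  have hA : dx1 φ t₀ x₁ x₂ = (G (t₀, x₁, x₂)).1 := key1 _ _ _ hev.self_of_nhds
  have hB2 : dx2 φ t₀ x₁ x₂ = (G (t₀, x₁, x₂)).2 := key2 _ _ _ hev.self_of_nhds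
  set A := (G (t₀, x₁, x₂)).1 with hAdef
  set B := (G (t₀, x₁, x₂)).2 with hBdef
  set ta := (DG (1, 0, 0)).1 with htadef
  set td := (DG (1, 0, 0)).2 with htddef
  have hbol : A * td - B * ta ≠ 0 := by
    have h := hB
    rw [bolker, hA, hB2, ha', hd'] at h
    exact h
  -- the candidate derivative, built from continuous linear map combinators
  let P0 : (ℝ × ℝ × ℝ × ℝ) →L[ℝ] ℝ := ContinuousLinearMap.fst ℝ ℝ (ℝ × ℝ × ℝ)
  let Q : (ℝ × ℝ × ℝ × ℝ) →L[ℝ] ℝ × ℝ × ℝ := ContinuousLinearMap.snd ℝ ℝ (ℝ × ℝ × ℝ)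
  let P1 : (ℝ × ℝ × ℝ × ℝ) →L[ℝ] ℝ := (ContinuousLinearMap.fst ℝ ℝ (ℝ × ℝ)).comp Q
  let Q2 : (ℝ × ℝ × ℝ × ℝ) →L[ℝ] ℝ × ℝ := (ContinuousLinearMap.snd ℝ ℝ (ℝ × ℝ)).comp Q
  let P2 : (ℝ × ℝ × ℝ × ℝ) →L[ℝ] ℝ := (ContinuousLinearMap.fst ℝ ℝ ℝ).comp Q2
  let S : (ℝ × ℝ × ℝ × ℝ) →L[ℝ] ℝ := (ContinuousLinearMap.snd ℝ ℝ ℝ).comp Q2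
  let πL : (ℝ × ℝ × ℝ × ℝ) →L[ℝ] ℝ × ℝ × ℝ := P0.prod (P1.prod P2)
  let DGp : (ℝ × ℝ × ℝ × ℝ) →L[ℝ] ℝ × ℝ := DG.comp πL
  let f1' : (ℝ × ℝ × ℝ × ℝ) →L[ℝ] ℝ := (ContinuousLinearMap.fst ℝ ℝ ℝ).comp DGp
  let f2' : (ℝ × ℝ × ℝ × ℝ) →L[ℝ] ℝ := (ContinuousLinearMap.snd ℝ ℝ ℝ).comp DGp
  let L : (ℝ × ℝ × ℝ × ℝ) →L[ℝ] ℝ × ℝ × ℝ × ℝ :=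
    P1.prod (P2.prod ((σ₀ • f1' + A • S).prod (σ₀ • f2' + B • S)))
  have hval : ∀ n : ℝ × ℝ × ℝ × ℝ, L n =
      (n.2.1, n.2.2.1, σ₀ * (DG (n.1, n.2.1, n.2.2.1)).1 + A * n.2.2.2,
        σ₀ * (DG (n.1, n.2.1, n.2.2.1)).2 + B * n.2.2.2) := fun n => rfl
  -- L is injective, by the Bolker condition
  have hinj : Function.Injective L := by
    have hker : ∀ n : ℝ × ℝ × ℝ × ℝ, L n = 0 → n = 0 := by
      rintro ⟨α, u, v, s⟩ hn
      rw [hval] at hn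
      simp only [Prod.mk_eq_zero] at hn
      obtain ⟨hu, hv, h3, h4⟩ := hn
      subst hu hv
      have hsm : ((α, (0:ℝ), (0:ℝ)) : ℝ × ℝ × ℝ) = α • ((1:ℝ), (0:ℝ), (0:ℝ)) := by
        simp
      rw [hsm, map_smul] at h3 h4
      rw [Prod.smul_fst, smul_eq_mul, ← htadef] at h3
      rw [Prod.smul_snd, smul_eq_mul, ← htddef] at h4
      have hα : α = 0 := by
        have h5 : σ₀ * (ta * B - td * A) * α = 0 := by linear_combination B * h3 - A * h4
        have h6 : ta * B - td * A ≠ 0 := fun h => hbol (by linarith)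
        rcases mul_eq_zero.mp h5 with h | h
        · exact absurd h (mul_ne_zero hσ h6)
        · exact h
      subst hα
      have hs : s = 0 := by
        by_contra hs0
        have hA0 : A = 0 := by
          have : A * s = 0 := by linear_combination h3
          rcases mul_eq_zero.mp this with h | h
          · exact h
          · exact absurd h hs0
        have hB0 : B = 0 := by
          have : B * s = 0 := by linear_combination h4
          rcases mul_eq_zero.mp this with h | h
          · exact h
          · exact absurd h hs0
        exact hbol (by rw [hA0, hB0]; ring)
      subst hs
      rfl
    intro m n hmn
    have h0 : L (m - n) = 0 := by rw [map_sub, hmn, sub_self]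
    exact sub_eq_zero.mp (hker _ h0)
  -- the smooth model map Ψ and its derivative
  set p : ℝ × ℝ × ℝ × ℝ := (t₀, x₁, x₂, σ₀) with hpdef
  set Ψ : ℝ × ℝ × ℝ × ℝ → ℝ × ℝ × ℝ × ℝ := fun q =>
    (q.2.1, q.2.2.1, q.2.2.2 * (G (q.1, q.2.1, q.2.2.1)).1,
      q.2.2.2 * (G (q.1, q.2.1, q.2.2.1)).2) with hΨdef
  have hπ : HasFDerivAt (fun q : ℝ × ℝ × ℝ × ℝ => ((q.1, q.2.1, q.2.2.1) : ℝ × ℝ × ℝ)) πL p :=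
    πL.hasFDerivAt
  have h0 : HasFDerivAt (fun q : ℝ × ℝ × ℝ × ℝ => G (q.1, q.2.1, q.2.2.1)) DGp p :=
    HasFDerivAt.comp p hGd hπ
  have h1 : HasFDerivAt (fun q : ℝ × ℝ × ℝ × ℝ => (G (q.1, q.2.1, q.2.2.1)).1) f1' p :=
    HasFDerivAt.comp p (ContinuousLinearMap.fst ℝ ℝ ℝ).hasFDerivAt h0
  have h2 : HasFDerivAt (fun q : ℝ × ℝ × ℝ × ℝ => (G (q.1, q.2.1, q.2.2.1)).2) f2' p :=
    HasFDerivAt.comp p (ContinuousLinearMap.snd ℝ ℝ ℝ).hasFDerivAt h0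
  have hSd : HasFDerivAt (fun q : ℝ × ℝ × ℝ × ℝ => q.2.2.2) S p := S.hasFDerivAt
  have hm1 : HasFDerivAt (fun q : ℝ × ℝ × ℝ × ℝ => q.2.2.2 * (G (q.1, q.2.1, q.2.2.1)).1)
      (σ₀ • f1' + A • S) p := hSd.mul h1
  have hm2 : HasFDerivAt (fun q : ℝ × ℝ × ℝ × ℝ => q.2.2.2 * (G (q.1, q.2.1, q.2.2.1)).2)
      (σ₀ • f2' + B • S) p := hSd.mul h2
  have hΨd : HasFDerivAt Ψ L p :=
    (P1.hasFDerivAt.prodMk (P2.hasFDerivAt.prodMk (hm1.prodMk hm2)))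
  have hπc : ContDiff ℝ 1 (fun q : ℝ × ℝ × ℝ × ℝ => ((q.1, q.2.1, q.2.2.1) : ℝ × ℝ × ℝ)) := by
    fun_prop
  have hGπ : ContDiffAt ℝ 1 (fun q : ℝ × ℝ × ℝ × ℝ => G (q.1, q.2.1, q.2.2.1)) p :=
    ContDiffAt.comp p hG hπc.contDiffAt
  have hσc : ContDiffAt ℝ 1 (fun q : ℝ × ℝ × ℝ × ℝ => q.2.2.2) p := by fun_prop
  have hΨc : ContDiffAt ℝ 1 Ψ p := by
    refine ContDiffAt.prodMk (by fun_prop) (ContDiffAt.prodMk (by fun_prop) (ContDiffAt.prodMk ?_ ?_))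
    · exact hσc.mul (ContDiffAt.comp p contDiffAt_fst hGπ)
    · exact hσc.mul (ContDiffAt.comp p contDiffAt_snd hGπ)
  -- PiX agrees with Ψ near p
  have hprojcont : Filter.Tendsto (fun q : ℝ × ℝ × ℝ × ℝ => ((q.1, q.2.1, q.2.2.1) : ℝ × ℝ × ℝ))
      (nhds p) (nhds (t₀, x₁, x₂)) := Continuous.tendsto (by fun_prop) p
  have heq : PiX φ =ᶠ[nhds p] Ψ := by
    refine (hprojcont.eventually hev).mono fun q hq => ?_
    show PiX φ q = Ψ q
    rw [PiX, key1 _ _ _ hq, key2 _ _ _ hq]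
  have hfc : ContDiffAt ℝ 1 (PiX φ) p := hΨc.congr_of_eventuallyEq heq
  have hfd : HasFDerivAt (PiX φ) L p := hΨd.congr_of_eventuallyEq heq
  -- build the continuous linear equivalence
  have hbij : Function.Bijective L :=
    ⟨hinj, (LinearMap.injective_iff_surjective
      (f := (L : (ℝ×ℝ×ℝ×ℝ) →ₗ[ℝ] ℝ×ℝ×ℝ×ℝ))).mp hinj⟩
  let E : (ℝ × ℝ × ℝ × ℝ) ≃ₗ[ℝ] ℝ × ℝ × ℝ × ℝ :=
    LinearEquiv.ofBijective (L : (ℝ×ℝ×ℝ×ℝ) →ₗ[ℝ] ℝ×ℝ×ℝ×ℝ) hbij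
  let E' : (ℝ × ℝ × ℝ × ℝ) ≃L[ℝ] ℝ × ℝ × ℝ × ℝ := E.toContinuousLinearEquiv
  have hE : (E' : (ℝ × ℝ × ℝ × ℝ) →L[ℝ] ℝ × ℝ × ℝ × ℝ) = L :=
    ContinuousLinearMap.ext fun x => rfl
  have hfd' : HasFDerivAt (PiX φ) (E' : (ℝ × ℝ × ℝ × ℝ) →L[ℝ] ℝ × ℝ × ℝ × ℝ) p := hE ▸ hfd
  -- inverse function theorem
  have hn : (1 : WithTop ℕ∞) ≠ 0 := one_ne_zero
  set e := hfc.toOpenPartialHomeomorph (PiX φ) hfd' hn with hedef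
  have hcoe : ⇑e = PiX φ := hfc.toOpenPartialHomeomorph_coe hfd' hn
  have hps : p ∈ e.source := hfc.mem_toOpenPartialHomeomorph_source hfd' hn
  have hpt : PiX φ p ∈ e.target := hfc.image_mem_toOpenPartialHomeomorph_target hfd' hn
  have hsymm : ContDiffAt ℝ 1 e.symm (PiX φ p) := hfc.to_localInverse hfd' hn
  obtain ⟨w, hw_mem, hw⟩ := hsymm.contDiffOn le_rfl (by simp)
  set V : Set (ℝ × ℝ × ℝ × ℝ) := e.target ∩ interior w with hVdef
  set U : Set (ℝ × ℝ × ℝ × ℝ) := e.source ∩ e ⁻¹' V with hUdef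
  have hVopen : IsOpen V := e.open_target.inter isOpen_interior
  have hUopen : IsOpen U := e.isOpen_inter_preimage hVopen
  have hfpV : PiX φ p ∈ V := ⟨hpt, mem_interior_iff_mem_nhds.mpr hw_mem⟩
  have hpU : p ∈ U := ⟨hps, by rw [Set.mem_preimage, hcoe]; exact hfpV⟩
  have hbijon : Set.BijOn (⇑e) U V := by
    refine ⟨fun q hq => hq.2, e.injOn.mono Set.inter_subset_left, fun y hy => ?_⟩
    exact ⟨e.symm y, ⟨e.map_target hy.1, by rw [Set.mem_preimage, e.right_inv hy.1]; exact hy⟩,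
      e.right_inv hy.1⟩
  refine ⟨U, V, e.symm, hUopen, hVopen, hpU, hfpV, hcoe ▸ hbijon, ?_, ?_, ?_⟩
  · exact hw.mono fun y hy => interior_subset hy.2
  · intro q hq
    rw [← hcoe]; exact e.left_inv hq.1
  · intro y hy
    rw [← hcoe]; exact e.right_inv hy.1
end

section
/- Let φ : ℝ × ℝ² → ℝ be C² on a neighborhood of (t₀, x₀), let σ₀ ≠ 0, and assume h(t₀, x₀) ≠ 0. Set p = (t₀, x₀, σ₀), Π_Y(t,x,σ) = (φ(t,x), t, σ, −σ·∂ₜφ(t,x)) ∈ ℝ⁴ and Π_X(t,x,σ) = (x, σ·∇ₓφ(t,x)) ∈ ℝ⁴. Then the correspondence Π_X ∘ Π_Y⁻¹ from measurement covectors to position covectors is a local diffeomorphism at Π_Y(p): there exist an open neighborhood U of p, an open neighborhood W of Π_Y(p), and a map T : W → ℝ⁴ that is a C¹ diffeomorphism onto its (open) image, such that T(Π_Y(q)) = Π_X(q) for all q ∈ U. (Lemma 4.3.) -/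
set_option maxHeartbeats 2000000 in
/-- Lemma 4.3: the correspondence Π_X ∘ Π_Y⁻¹ from measurement covectors to
position covectors is a local diffeomorphism at Π_Y(t₀, x₀, σ₀): there are a
neighborhood U of (t₀,x₀,σ₀), a neighborhood W of Π_Y(t₀,x₀,σ₀), and a map T
on W which is a C¹ diffeomorphism onto its open image and satisfies
T ∘ Π_Y = Π_X on U. -/
theorem stmt7 (φ : ℝ → ℝ → ℝ → ℝ) (t₀ x₁ x₂ σ₀ : ℝ)
    (hφ : ContDiffAt ℝ 2 (fun p : ℝ × ℝ × ℝ => φ p.1 p.2.1 p.2.2) (t₀, x₁, x₂))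
    (hσ : σ₀ ≠ 0) (hB : bolker φ t₀ x₁ x₂ ≠ 0) :
    ∃ (U W : Set (ℝ × ℝ × ℝ × ℝ)) (T S : ℝ × ℝ × ℝ × ℝ → ℝ × ℝ × ℝ × ℝ),
      IsOpen U ∧ (t₀, x₁, x₂, σ₀) ∈ U ∧
      IsOpen W ∧ PiY φ (t₀, x₁, x₂, σ₀) ∈ W ∧
      IsOpen (T '' W) ∧ Set.InjOn T W ∧ ContDiffOn ℝ 1 T W ∧
      ContDiffOn ℝ 1 S (T '' W) ∧ (∀ w ∈ W, S (T w) = w) ∧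
      (∀ q ∈ U, T (PiY φ q) = PiX φ q) := by
  obtain ⟨u, hu_nhds, hΦu⟩ := hφ.contDiffOn le_rfl (by simp)
  set Φ : ℝ × ℝ × ℝ → ℝ := fun z => φ z.1 z.2.1 z.2.2 with hΦdef
  set z₀ : ℝ × ℝ × ℝ := (t₀, x₁, x₂) with hz₀def
  set s : Set (ℝ × ℝ × ℝ) := interior u with hsdef
  have hs_open : IsOpen s := isOpen_interior
  have hz₀s : z₀ ∈ s := mem_interior_iff_mem_nhds.2 hu_nhds
  have hΦs : ContDiffOn ℝ 2 Φ s := hΦu.mono interior_subset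
  set g : ℝ × ℝ × ℝ → (ℝ × ℝ × ℝ) →L[ℝ] ℝ := fderiv ℝ Φ with hgdef
  have hg : ContDiffOn ℝ 1 g s := hΦs.fderiv_of_isOpen hs_open (by norm_num)
  have hΦd : ∀ z ∈ s, HasFDerivAt Φ (g z) z := fun z hz =>
    ((hΦs.differentiableOn (by norm_num) z hz).differentiableAt
      (hs_open.mem_nhds hz)).hasFDerivAt
  -- slice identities
  have hdt : ∀ a b c : ℝ, ((a,b,c) : ℝ×ℝ×ℝ) ∈ s → dt φ a b c = g (a,b,c) (1,0,0) := by
    intro a b c h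
    have hcurve : HasDerivAt (fun y : ℝ => ((y, b, c) : ℝ×ℝ×ℝ)) ((1,0,0) : ℝ×ℝ×ℝ) a :=
      (hasDerivAt_id a).prodMk ((hasDerivAt_const a b).prodMk (hasDerivAt_const a c))
    exact (HasFDerivAt.comp_hasDerivAt_of_eq (hl := hΦd (a,b,c) h) (hf := hcurve) (hy := rfl)).deriv
  have hdx1 : ∀ a b c : ℝ, ((a,b,c) : ℝ×ℝ×ℝ) ∈ s → dx1 φ a b c = g (a,b,c) (0,1,0) := by
    intro a b c h
    have hcurve : HasDerivAt (fun y : ℝ => ((a, y, c) : ℝ×ℝ×ℝ)) ((0,1,0) : ℝ×ℝ×ℝ) b :=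
      (hasDerivAt_const b a).prodMk ((hasDerivAt_id b).prodMk (hasDerivAt_const b c))
    exact (HasFDerivAt.comp_hasDerivAt_of_eq (hl := hΦd (a,b,c) h) (hf := hcurve) (hy := rfl)).deriv
  have hdx2 : ∀ a b c : ℝ, ((a,b,c) : ℝ×ℝ×ℝ) ∈ s → dx2 φ a b c = g (a,b,c) (0,0,1) := by
    intro a b c h
    have hcurve : HasDerivAt (fun y : ℝ => ((a, b, y) : ℝ×ℝ×ℝ)) ((0,0,1) : ℝ×ℝ×ℝ) c :=
      (hasDerivAt_const c a).prodMk ((hasDerivAt_const c b).prodMk (hasDerivAt_id c))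
    exact (HasFDerivAt.comp_hasDerivAt_of_eq (hl := hΦd (a,b,c) h) (hf := hcurve) (hy := rfl)).deriv
  -- second derivative
  set H : (ℝ×ℝ×ℝ) →L[ℝ] (ℝ×ℝ×ℝ) →L[ℝ] ℝ := fderiv ℝ g z₀ with hHdef
  have hgd : HasFDerivAt g H z₀ :=
    ((hg.differentiableOn one_ne_zero z₀ hz₀s).differentiableAt (hs_open.mem_nhds hz₀s)).hasFDerivAt
  have hsymm : ∀ v w : ℝ×ℝ×ℝ, H v w = H w v := fun v w =>
    second_derivative_symmetric_of_eventually
      (Filter.eventually_of_mem (hs_open.mem_nhds hz₀s) hΦd) hgd v w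
  -- derivative of the apply-maps
  have happly : ∀ v : ℝ×ℝ×ℝ, HasFDerivAt (fun z => g z v)
      ((ContinuousLinearMap.apply ℝ ℝ v).comp H) z₀ := fun v =>
    (ContinuousLinearMap.apply ℝ ℝ v).hasFDerivAt.comp z₀ hgd
  have hslice : ∀ v : ℝ×ℝ×ℝ, deriv (fun a => g (a, x₁, x₂) v) t₀ = H (1,0,0) v := by
    intro v
    have hcurve : HasDerivAt (fun a : ℝ => ((a, x₁, x₂) : ℝ×ℝ×ℝ)) ((1,0,0) : ℝ×ℝ×ℝ) t₀ :=
      (hasDerivAt_id t₀).prodMk ((hasDerivAt_const t₀ x₁).prodMk (hasDerivAt_const t₀ x₂))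
    have := (HasFDerivAt.comp_hasDerivAt_of_eq (hl := happly v) (hf := hcurve) (hy := rfl)).deriv
    simpa [Function.comp_def] using this
  have hnear : ∀ᶠ a in nhds t₀, ((a, x₁, x₂) : ℝ×ℝ×ℝ) ∈ s := by
    have hc : Continuous (fun a : ℝ => ((a, x₁, x₂) : ℝ×ℝ×ℝ)) := by
      exact continuous_id.prodMk continuous_const
    exact hc.continuousAt.preimage_mem_nhds (hs_open.mem_nhds hz₀s)
  have hd1 : deriv (fun a => dx1 φ a x₁ x₂) t₀ = H (1,0,0) (0,1,0) := by
    have hev : (fun a => dx1 φ a x₁ x₂) =ᶠ[nhds t₀] (fun a => g (a, x₁, x₂) ((0,1,0) : ℝ×ℝ×ℝ)) :=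
      hnear.mono (fun a ha => hdx1 a x₁ x₂ ha)
    rw [hev.deriv_eq, hslice]
  have hd2 : deriv (fun a => dx2 φ a x₁ x₂) t₀ = H (1,0,0) (0,0,1) := by
    have hev : (fun a => dx2 φ a x₁ x₂) =ᶠ[nhds t₀] (fun a => g (a, x₁, x₂) ((0,0,1) : ℝ×ℝ×ℝ)) :=
      hnear.mono (fun a ha => hdx2 a x₁ x₂ ha)
    rw [hev.deriv_eq, hslice]
  have hbolk : bolker φ t₀ x₁ x₂ =
      g z₀ (0,1,0) * H (1,0,0) (0,0,1) - g z₀ (0,0,1) * H (1,0,0) (0,1,0) := by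
    rw [bolker, hd1, hd2, hdx1 t₀ x₁ x₂ hz₀s, hdx2 t₀ x₁ x₂ hz₀s]
  -- projections as CLMs
  set π : (ℝ×ℝ×ℝ×ℝ) →L[ℝ] (ℝ×ℝ×ℝ) :=
    (ContinuousLinearMap.fst ℝ ℝ (ℝ×ℝ×ℝ)).prod
      (((ContinuousLinearMap.fst ℝ ℝ (ℝ×ℝ)).prod
        ((ContinuousLinearMap.fst ℝ ℝ ℝ).comp (ContinuousLinearMap.snd ℝ ℝ (ℝ×ℝ)))).comp
        (ContinuousLinearMap.snd ℝ ℝ (ℝ×ℝ×ℝ))) with hπdef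
  have hπapp : ∀ q : ℝ×ℝ×ℝ×ℝ, π q = (q.1, q.2.1, q.2.2.1) := fun q => rfl
  set projσ : (ℝ×ℝ×ℝ×ℝ) →L[ℝ] ℝ :=
    (ContinuousLinearMap.snd ℝ ℝ ℝ).comp
      ((ContinuousLinearMap.snd ℝ ℝ (ℝ×ℝ)).comp (ContinuousLinearMap.snd ℝ ℝ (ℝ×ℝ×ℝ)))
    with hprojσdef
  have hprojσapp : ∀ q : ℝ×ℝ×ℝ×ℝ, projσ q = q.2.2.2 := fun q => rfl
  set πf : (ℝ×ℝ×ℝ×ℝ) → (ℝ×ℝ×ℝ) := fun q => (q.1, q.2.1, q.2.2.1) with hπfdef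
  have hπcoe : (π : (ℝ×ℝ×ℝ×ℝ) → (ℝ×ℝ×ℝ)) = πf := funext hπapp
  have hπ : ∀ q : ℝ×ℝ×ℝ×ℝ, HasFDerivAt πf π q := fun q => hπcoe ▸ π.hasFDerivAt
  have hπfcd : ContDiff ℝ 1 πf := hπcoe ▸ π.contDiff
  have hprojσcd : ContDiff ℝ 1 (fun q : ℝ×ℝ×ℝ×ℝ => q.2.2.2) :=
    (funext hprojσapp : (projσ : (ℝ×ℝ×ℝ×ℝ) → ℝ) = _) ▸ projσ.contDiff
  set p : ℝ×ℝ×ℝ×ℝ := (t₀, x₁, x₂, σ₀) with hpdef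
  have hπfp : πf p = z₀ := rfl
  have hsU : IsOpen (πf ⁻¹' s) := hs_open.preimage hπfcd.continuous
  have hpsU : p ∈ πf ⁻¹' s := hz₀s
  have hΦz₀ : HasFDerivAt Φ (g z₀) z₀ := hΦd z₀ hz₀s
  have h3 : HasFDerivAt (fun q : ℝ×ℝ×ℝ×ℝ => q.2.2.2) projσ p :=
    (funext hprojσapp : (projσ : (ℝ×ℝ×ℝ×ℝ) → ℝ) = _) ▸ projσ.hasFDerivAt
  -- the Y-side derivative
  have h1 : HasFDerivAt (fun q : ℝ×ℝ×ℝ×ℝ => Φ (πf q)) ((g z₀).comp π) p :=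
    by have := hΦz₀.comp p (hπ p); exact this
  have h2 : HasFDerivAt (fun q : ℝ×ℝ×ℝ×ℝ => q.1)
      (ContinuousLinearMap.fst ℝ ℝ (ℝ×ℝ×ℝ)) p := hasFDerivAt_fst
  have h4 : HasFDerivAt
      (fun q : ℝ×ℝ×ℝ×ℝ => -q.2.2.2 * g (πf q) ((1,0,0) : ℝ×ℝ×ℝ))
      ((-p.2.2.2) • (((ContinuousLinearMap.apply ℝ ℝ ((1,0,0):ℝ×ℝ×ℝ)).comp H).comp π) +
        (g (πf p) ((1,0,0):ℝ×ℝ×ℝ)) • (-projσ)) p :=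
    HasFDerivAt.mul (h3.neg) (by have := (happly (1,0,0)).comp p (hπ p); exact this)
  have hFY : HasFDerivAt (fun q : ℝ×ℝ×ℝ×ℝ =>
      (Φ (πf q), q.1, q.2.2.2, -q.2.2.2 * g (πf q) ((1,0,0) : ℝ×ℝ×ℝ)))
      (((g z₀).comp π).prod ((ContinuousLinearMap.fst ℝ ℝ (ℝ×ℝ×ℝ)).prod (projσ.prod
        ((-p.2.2.2) • (((ContinuousLinearMap.apply ℝ ℝ ((1,0,0):ℝ×ℝ×ℝ)).comp H).comp π) +
          (g (πf p) ((1,0,0):ℝ×ℝ×ℝ)) • (-projσ))))) p :=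
    h1.prodMk (h2.prodMk (h3.prodMk h4))
  -- eventual equality of PiY with the smooth model
  have hevY : PiY φ =ᶠ[nhds p] (fun q : ℝ×ℝ×ℝ×ℝ =>
      (Φ (πf q), q.1, q.2.2.2, -q.2.2.2 * g (πf q) ((1,0,0) : ℝ×ℝ×ℝ))) := by
    refine Filter.eventually_of_mem (hsU.mem_nhds hpsU) (fun q hq => ?_)
    have h := hdt q.1 q.2.1 q.2.2.1 hq
    simp only [PiY, h]; rfl
  have hPiYd : HasFDerivAt (PiY φ) _ p := hFY.congr_of_eventuallyEq hevY
  have hgcd : ContDiffAt ℝ 1 g z₀ := hg.contDiffAt (hs_open.mem_nhds hz₀s)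
  have hcdY : ContDiffAt ℝ 1 (PiY φ) p := by
    refine ContDiffAt.congr_of_eventuallyEq ?_ hevY
    exact ((hφ.of_le (by norm_num)).comp p hπfcd.contDiffAt).prodMk
      (contDiff_fst.contDiffAt.prodMk (hprojσcd.contDiffAt.prodMk
        ((hprojσcd.contDiffAt.neg).mul
          ((hgcd.clm_apply contDiffAt_const).comp p hπfcd.contDiffAt))))
  -- injectivity of the Y-side derivative
  have hinjY : Function.Injective
      (⇑(((g z₀).comp π).prod ((ContinuousLinearMap.fst ℝ ℝ (ℝ×ℝ×ℝ)).prod (projσ.prod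
        ((-p.2.2.2) • (((ContinuousLinearMap.apply ℝ ℝ ((1,0,0):ℝ×ℝ×ℝ)).comp H).comp π) +
          (g (πf p) ((1,0,0):ℝ×ℝ×ℝ)) • (-projσ)))))) := by
    rw [injective_iff_map_eq_zero]
    rintro ⟨vt, v1, v2, vσ⟩ hv
    simp only [ContinuousLinearMap.prod_apply, ContinuousLinearMap.comp_apply,
      ContinuousLinearMap.add_apply, ContinuousLinearMap.coe_smul', Pi.smul_apply,
      ContinuousLinearMap.neg_apply, ContinuousLinearMap.coe_fst',
      ContinuousLinearMap.apply_apply, hπapp, hprojσapp, smul_eq_mul,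
      Prod.mk_eq_zero] at hv
    obtain ⟨e1, e2, e3, e4⟩ := hv
    subst e2; subst e3
    have hgl : ∀ w : ℝ×ℝ×ℝ, g z₀ w =
        w.1 * g z₀ (1,0,0) + w.2.1 * g z₀ (0,1,0) + w.2.2 * g z₀ (0,0,1) := by
      intro w
      have hw : (w.1 • ((1,0,0) : ℝ×ℝ×ℝ) + w.2.1 • ((0,1,0) : ℝ×ℝ×ℝ)
          + w.2.2 • ((0,0,1) : ℝ×ℝ×ℝ)) = w := by
        refine Prod.ext ?_ (Prod.ext ?_ ?_) <;> simp
      conv_lhs => rw [← hw]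
      rw [map_add, map_add, map_smul, map_smul, map_smul]
      simp [smul_eq_mul]
    have hHl : ∀ w : ℝ×ℝ×ℝ, H w ((1,0,0) : ℝ×ℝ×ℝ) =
        w.1 * H (1,0,0) (1,0,0) + w.2.1 * H (0,1,0) (1,0,0) + w.2.2 * H (0,0,1) (1,0,0) := by
      intro w
      have hw : (w.1 • ((1,0,0) : ℝ×ℝ×ℝ) + w.2.1 • ((0,1,0) : ℝ×ℝ×ℝ)
          + w.2.2 • ((0,0,1) : ℝ×ℝ×ℝ)) = w := by
        refine Prod.ext ?_ (Prod.ext ?_ ?_) <;> simp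
      conv_lhs => rw [← hw]
      rw [map_add, map_add, map_smul, map_smul, map_smul]
      simp [ContinuousLinearMap.add_apply, ContinuousLinearMap.smul_apply, smul_eq_mul]
    rw [hgl] at e1
    rw [hHl] at e4
    simp only [hπfp] at e1 e4 ⊢
    -- now scalar equations
    have hA := hdx1 t₀ x₁ x₂ hz₀s
    set A := g z₀ ((0,1,0) : ℝ×ℝ×ℝ)
    set B := g z₀ ((0,0,1) : ℝ×ℝ×ℝ)
    set C := H ((1,0,0) : ℝ×ℝ×ℝ) ((0,1,0) : ℝ×ℝ×ℝ)
    set D := H ((1,0,0) : ℝ×ℝ×ℝ) ((0,0,1) : ℝ×ℝ×ℝ)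
    have hsy1 : H ((0,1,0) : ℝ×ℝ×ℝ) ((1,0,0) : ℝ×ℝ×ℝ) = C := hsymm _ _
    have hsy2 : H ((0,0,1) : ℝ×ℝ×ℝ) ((1,0,0) : ℝ×ℝ×ℝ) = D := hsymm _ _
    rw [hsy1, hsy2] at e4
    have hbne : A * D - B * C ≠ 0 := by rw [hbolk] at hB; exact hB
    -- e1 : 0 * _ + v1 * A + v2 * B = 0 ; e4 : -σ₀ * (0 * _ + v1 * C + v2 * D) + _ * -0 = 0
    have q1 : v1 * A + v2 * B = 0 := by linear_combination e1
    have q2 : σ₀ * (v1 * C + v2 * D) = 0 := by linear_combination -e4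
    have q2' : v1 * C + v2 * D = 0 := by
      rcases mul_eq_zero.1 q2 with h | h
      · exact absurd h hσ
      · exact h
    have hv1 : v1 = 0 := by
      have hz : v1 * (A * D - B * C) = 0 := by linear_combination D * q1 - B * q2'
      exact (mul_eq_zero.1 hz).resolve_right hbne
    have hv2 : v2 = 0 := by
      have hz : v2 * (A * D - B * C) = 0 := by linear_combination A * q2' - C * q1
      exact (mul_eq_zero.1 hz).resolve_right hbne
    simp [hv1, hv2, Prod.ext_iff]
  -- continuous linear equiv for Y side
  set LY : (ℝ×ℝ×ℝ×ℝ) →L[ℝ] (ℝ×ℝ×ℝ×ℝ) :=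
    ((g z₀).comp π).prod ((ContinuousLinearMap.fst ℝ ℝ (ℝ×ℝ×ℝ)).prod (projσ.prod
      ((-p.2.2.2) • (((ContinuousLinearMap.apply ℝ ℝ ((1,0,0):ℝ×ℝ×ℝ)).comp H).comp π) +
        (g (πf p) ((1,0,0):ℝ×ℝ×ℝ)) • (-projσ)))) with hLYdef
  have hinjY' : Function.Injective ((LY : (ℝ×ℝ×ℝ×ℝ) →ₗ[ℝ] (ℝ×ℝ×ℝ×ℝ))) := hinjY
  set eY : (ℝ×ℝ×ℝ×ℝ) ≃L[ℝ] (ℝ×ℝ×ℝ×ℝ) :=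
    (LinearEquiv.ofInjectiveEndo (LY : (ℝ×ℝ×ℝ×ℝ) →ₗ[ℝ] (ℝ×ℝ×ℝ×ℝ))
      hinjY').toContinuousLinearEquiv with heYdef
  have heYcoe : (eY : (ℝ×ℝ×ℝ×ℝ) →L[ℝ] (ℝ×ℝ×ℝ×ℝ)) = LY :=
    ContinuousLinearMap.ext fun v => rfl
  have hPiYd' : HasFDerivAt (PiY φ) ((eY : (ℝ×ℝ×ℝ×ℝ) →L[ℝ] (ℝ×ℝ×ℝ×ℝ))) p := by
    rw [heYcoe]; exact hPiYd
  set PY : OpenPartialHomeomorph (ℝ×ℝ×ℝ×ℝ) (ℝ×ℝ×ℝ×ℝ) :=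
    hcdY.toOpenPartialHomeomorph (PiY φ) hPiYd' one_ne_zero with hPYdef
  have hPYcoe : (PY : (ℝ×ℝ×ℝ×ℝ) → (ℝ×ℝ×ℝ×ℝ)) = PiY φ := rfl
  have hpPY : p ∈ PY.source := hcdY.mem_toOpenPartialHomeomorph_source hPiYd' one_ne_zero
  have hpPYt : PiY φ p ∈ PY.target := hcdY.image_mem_toOpenPartialHomeomorph_target hPiYd' one_ne_zero
  have hPYsymm_p : PY.symm (PiY φ p) = p := by
    have := PY.left_inv hpPY
    rwa [hPYcoe] at this
  have hsymmY : ContDiffAt ℝ 1 PY.symm (PiY φ p) := by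
    refine PY.contDiffAt_symm (f₀' := eY) hpPYt ?_ ?_
    · rw [hPYsymm_p, hPYcoe]; exact hPiYd'
    · rw [hPYsymm_p, hPYcoe]; exact hcdY
  -- X side
  set proj1 : (ℝ×ℝ×ℝ×ℝ) →L[ℝ] ℝ :=
    (ContinuousLinearMap.fst ℝ ℝ (ℝ×ℝ)).comp (ContinuousLinearMap.snd ℝ ℝ (ℝ×ℝ×ℝ)) with hproj1def
  set proj2 : (ℝ×ℝ×ℝ×ℝ) →L[ℝ] ℝ :=
    (ContinuousLinearMap.fst ℝ ℝ ℝ).comp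
      ((ContinuousLinearMap.snd ℝ ℝ (ℝ×ℝ)).comp (ContinuousLinearMap.snd ℝ ℝ (ℝ×ℝ×ℝ)))
    with hproj2def
  have hproj1app : ∀ q : ℝ×ℝ×ℝ×ℝ, proj1 q = q.2.1 := fun q => rfl
  have hproj2app : ∀ q : ℝ×ℝ×ℝ×ℝ, proj2 q = q.2.2.1 := fun q => rfl
  have k1 : HasFDerivAt (fun q : ℝ×ℝ×ℝ×ℝ => q.2.1) proj1 p :=
    (funext hproj1app : (proj1 : (ℝ×ℝ×ℝ×ℝ) → ℝ) = _) ▸ proj1.hasFDerivAt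
  have k2 : HasFDerivAt (fun q : ℝ×ℝ×ℝ×ℝ => q.2.2.1) proj2 p :=
    (funext hproj2app : (proj2 : (ℝ×ℝ×ℝ×ℝ) → ℝ) = _) ▸ proj2.hasFDerivAt
  have k3 : HasFDerivAt
      (fun q : ℝ×ℝ×ℝ×ℝ => q.2.2.2 * g (πf q) ((0,1,0) : ℝ×ℝ×ℝ))
      (p.2.2.2 • (((ContinuousLinearMap.apply ℝ ℝ ((0,1,0):ℝ×ℝ×ℝ)).comp H).comp π) +
        (g (πf p) ((0,1,0):ℝ×ℝ×ℝ)) • projσ) p :=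
    HasFDerivAt.mul h3 (by have := (happly (0,1,0)).comp p (hπ p); exact this)
  have k4 : HasFDerivAt
      (fun q : ℝ×ℝ×ℝ×ℝ => q.2.2.2 * g (πf q) ((0,0,1) : ℝ×ℝ×ℝ))
      (p.2.2.2 • (((ContinuousLinearMap.apply ℝ ℝ ((0,0,1):ℝ×ℝ×ℝ)).comp H).comp π) +
        (g (πf p) ((0,0,1):ℝ×ℝ×ℝ)) • projσ) p :=
    HasFDerivAt.mul h3 (by have := (happly (0,0,1)).comp p (hπ p); exact this)
  set LX : (ℝ×ℝ×ℝ×ℝ) →L[ℝ] (ℝ×ℝ×ℝ×ℝ) :=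
    proj1.prod (proj2.prod (
      (p.2.2.2 • (((ContinuousLinearMap.apply ℝ ℝ ((0,1,0):ℝ×ℝ×ℝ)).comp H).comp π) +
        (g (πf p) ((0,1,0):ℝ×ℝ×ℝ)) • projσ).prod
      (p.2.2.2 • (((ContinuousLinearMap.apply ℝ ℝ ((0,0,1):ℝ×ℝ×ℝ)).comp H).comp π) +
        (g (πf p) ((0,0,1):ℝ×ℝ×ℝ)) • projσ))) with hLXdef
  have hFX : HasFDerivAt (fun q : ℝ×ℝ×ℝ×ℝ =>
      (q.2.1, q.2.2.1, q.2.2.2 * g (πf q) ((0,1,0) : ℝ×ℝ×ℝ),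
        q.2.2.2 * g (πf q) ((0,0,1) : ℝ×ℝ×ℝ))) LX p :=
    k1.prodMk (k2.prodMk (k3.prodMk k4))
  have hevX : PiX φ =ᶠ[nhds p] (fun q : ℝ×ℝ×ℝ×ℝ =>
      (q.2.1, q.2.2.1, q.2.2.2 * g (πf q) ((0,1,0) : ℝ×ℝ×ℝ),
        q.2.2.2 * g (πf q) ((0,0,1) : ℝ×ℝ×ℝ))) := by
    refine Filter.eventually_of_mem (hsU.mem_nhds hpsU) (fun q hq => ?_)
    have ha := hdx1 q.1 q.2.1 q.2.2.1 hq
    have hb := hdx2 q.1 q.2.1 q.2.2.1 hq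
    simp only [PiX, ha, hb]; rfl
  have hPiXd : HasFDerivAt (PiX φ) LX p := hFX.congr_of_eventuallyEq hevX
  have hcdX : ContDiffAt ℝ 1 (PiX φ) p := by
    refine ContDiffAt.congr_of_eventuallyEq ?_ hevX
    exact ((contDiff_fst.comp contDiff_snd).contDiffAt).prodMk
      (((contDiff_fst.comp (contDiff_snd.comp contDiff_snd)).contDiffAt).prodMk
        ((hprojσcd.contDiffAt.mul
          (by have := (hgcd.clm_apply (contDiffAt_const (c := ((0,1,0):ℝ×ℝ×ℝ)))).comp p hπfcd.contDiffAt; exact this)).prodMk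
         (hprojσcd.contDiffAt.mul
          (by have := (hgcd.clm_apply (contDiffAt_const (c := ((0,0,1):ℝ×ℝ×ℝ)))).comp p hπfcd.contDiffAt; exact this))))
  have hinjX : Function.Injective (⇑LX) := by
    rw [injective_iff_map_eq_zero]
    rintro ⟨vt, v1, v2, vσ⟩ hv
    simp only [hLXdef, ContinuousLinearMap.prod_apply, ContinuousLinearMap.comp_apply,
      ContinuousLinearMap.add_apply, ContinuousLinearMap.coe_smul', Pi.smul_apply,
      ContinuousLinearMap.coe_fst', ContinuousLinearMap.coe_snd',
      ContinuousLinearMap.apply_apply, hπapp, hprojσapp, hproj1app, hproj2app, smul_eq_mul,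
      Prod.mk_eq_zero] at hv
    obtain ⟨e1, e2, e3, e4⟩ := hv
    subst e1; subst e2
    have hHl : ∀ w : ℝ×ℝ×ℝ, ∀ vv : ℝ×ℝ×ℝ, H w vv =
        w.1 * H (1,0,0) vv + w.2.1 * H (0,1,0) vv + w.2.2 * H (0,0,1) vv := by
      intro w vv
      have hw : (w.1 • ((1,0,0) : ℝ×ℝ×ℝ) + w.2.1 • ((0,1,0) : ℝ×ℝ×ℝ)
          + w.2.2 • ((0,0,1) : ℝ×ℝ×ℝ)) = w := by
        refine Prod.ext ?_ (Prod.ext ?_ ?_) <;> simp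
      conv_lhs => rw [← hw]
      rw [map_add, map_add, map_smul, map_smul, map_smul]
      simp [ContinuousLinearMap.add_apply, ContinuousLinearMap.smul_apply, smul_eq_mul]
    rw [hHl] at e3 e4
    simp only [hπfp] at e3 e4
    set A := g z₀ ((0,1,0) : ℝ×ℝ×ℝ)
    set B := g z₀ ((0,0,1) : ℝ×ℝ×ℝ)
    set C := H ((1,0,0) : ℝ×ℝ×ℝ) ((0,1,0) : ℝ×ℝ×ℝ)
    set D := H ((1,0,0) : ℝ×ℝ×ℝ) ((0,0,1) : ℝ×ℝ×ℝ)
    have hbne : A * D - B * C ≠ 0 := by rw [hbolk] at hB; exact hB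
    -- e3 : σ₀ * (vt*C + 0*_ + 0*_) + A * vσ = 0, e4 with D, B
    have q1 : σ₀ * vt * C + A * vσ = 0 := by linear_combination e3
    have q2 : σ₀ * vt * D + B * vσ = 0 := by linear_combination e4
    have hvt : vt = 0 := by
      have hz : (σ₀ * vt) * (B * C - A * D) = 0 := by linear_combination B * q1 - A * q2
      have : σ₀ * vt = 0 := by
        refine (mul_eq_zero.1 hz).resolve_right (fun hcon => hbne ?_)
        linarith
      rcases mul_eq_zero.1 this with h | h
      · exact absurd h hσ
      · exact h
    have hvσ : vσ = 0 := by
      subst hvt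
      have hA : A * vσ = 0 := by linear_combination q1
      have hBv : B * vσ = 0 := by linear_combination q2
      have hz : vσ * (A * D - B * C) = 0 := by linear_combination D * hA - C * hBv
      exact (mul_eq_zero.1 hz).resolve_right hbne
    simp [hvt, hvσ, Prod.ext_iff]
  have hinjX' : Function.Injective ((LX : (ℝ×ℝ×ℝ×ℝ) →ₗ[ℝ] (ℝ×ℝ×ℝ×ℝ))) := hinjX
  set eX : (ℝ×ℝ×ℝ×ℝ) ≃L[ℝ] (ℝ×ℝ×ℝ×ℝ) :=
    (LinearEquiv.ofInjectiveEndo (LX : (ℝ×ℝ×ℝ×ℝ) →ₗ[ℝ] (ℝ×ℝ×ℝ×ℝ))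
      hinjX').toContinuousLinearEquiv with heXdef
  have heXcoe : (eX : (ℝ×ℝ×ℝ×ℝ) →L[ℝ] (ℝ×ℝ×ℝ×ℝ)) = LX :=
    ContinuousLinearMap.ext fun v => rfl
  have hPiXd' : HasFDerivAt (PiX φ) ((eX : (ℝ×ℝ×ℝ×ℝ) →L[ℝ] (ℝ×ℝ×ℝ×ℝ))) p := by
    rw [heXcoe]; exact hPiXd
  set PX : OpenPartialHomeomorph (ℝ×ℝ×ℝ×ℝ) (ℝ×ℝ×ℝ×ℝ) :=
    hcdX.toOpenPartialHomeomorph (PiX φ) hPiXd' one_ne_zero with hPXdef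
  have hPXcoe : (PX : (ℝ×ℝ×ℝ×ℝ) → (ℝ×ℝ×ℝ×ℝ)) = PiX φ := rfl
  have hpPX : p ∈ PX.source := hcdX.mem_toOpenPartialHomeomorph_source hPiXd' one_ne_zero
  have hpPXt : PiX φ p ∈ PX.target := hcdX.image_mem_toOpenPartialHomeomorph_target hPiXd' one_ne_zero
  have hPXsymm_p : PX.symm (PiX φ p) = p := by
    have := PX.left_inv hpPX
    rwa [hPXcoe] at this
  have hsymmX : ContDiffAt ℝ 1 PX.symm (PiX φ p) := by
    refine PX.contDiffAt_symm (f₀' := eX) hpPXt ?_ ?_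
    · rw [hPXsymm_p, hPXcoe]; exact hPiXd'
    · rw [hPXsymm_p, hPXcoe]; exact hcdX
  -- neighborhoods of smoothness
  obtain ⟨nYs, hnYmem, hcdYon⟩ := hcdY.contDiffOn le_rfl (by simp)
  obtain ⟨nXs, hnXmem, hcdXon⟩ := hcdX.contDiffOn le_rfl (by simp)
  obtain ⟨uYs, huYmem, hsymmYon⟩ := hsymmY.contDiffOn le_rfl (by simp)
  obtain ⟨uXs, huXmem, hsymmXon⟩ := hsymmX.contDiffOn le_rfl (by simp)
  set np : Set (ℝ×ℝ×ℝ×ℝ) := interior nYs ∩ interior nXs ∩ PY.source ∩ PX.source with hnpdef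
  have hnp_open : IsOpen np :=
    ((isOpen_interior.inter isOpen_interior).inter PY.open_source).inter PX.open_source
  have hpnp : p ∈ np :=
    ⟨⟨⟨mem_interior_iff_mem_nhds.2 hnYmem, mem_interior_iff_mem_nhds.2 hnXmem⟩, hpPY⟩, hpPX⟩
  set uYo : Set (ℝ×ℝ×ℝ×ℝ) := interior uYs ∩ PY.target with huYodef
  have huYo_open : IsOpen uYo := isOpen_interior.inter PY.open_target
  have hPiYp_uYo : PiY φ p ∈ uYo := ⟨mem_interior_iff_mem_nhds.2 huYmem, hpPYt⟩
  set uXo : Set (ℝ×ℝ×ℝ×ℝ) := interior uXs ∩ PX.target with huXodef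
  have huXo_open : IsOpen uXo := isOpen_interior.inter PX.open_target
  have hPiXp_uXo : PiX φ p ∈ uXo := ⟨mem_interior_iff_mem_nhds.2 huXmem, hpPXt⟩
  set G : Set (ℝ×ℝ×ℝ×ℝ) := np ∩ (PiX φ) ⁻¹' uXo with hGdef
  have hG_open : IsOpen G :=
    ContinuousOn.isOpen_inter_preimage
      (hcdXon.continuousOn.mono (fun q hq => interior_subset hq.1.1.2)) hnp_open huXo_open
  have hpG : p ∈ G := ⟨hpnp, hPiXp_uXo⟩
  set W : Set (ℝ×ℝ×ℝ×ℝ) := uYo ∩ PY.symm ⁻¹' G with hWdef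
  have hW_open : IsOpen W :=
    ContinuousOn.isOpen_inter_preimage
      (PY.continuousOn_symm.mono (fun w hw => hw.2)) huYo_open hG_open
  have hPiYpW : PiY φ p ∈ W := by
    refine ⟨hPiYp_uYo, ?_⟩
    show PY.symm (PiY φ p) ∈ G
    rw [hPYsymm_p]; exact hpG
  -- the maps
  set T : (ℝ×ℝ×ℝ×ℝ) → (ℝ×ℝ×ℝ×ℝ) := fun w => PiX φ (PY.symm w) with hTdef
  set S : (ℝ×ℝ×ℝ×ℝ) → (ℝ×ℝ×ℝ×ℝ) := fun y => PiY φ (PX.symm y) with hSdef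
  -- pointwise facts on W
  have hWsub_target : W ⊆ PY.target := fun w hw => hw.1.2
  have hzG : ∀ w ∈ W, PY.symm w ∈ G := fun w hw => hw.2
  have hznp : ∀ w ∈ W, PY.symm w ∈ np := fun w hw => (hzG w hw).1
  have hzPXsrc : ∀ w ∈ W, PY.symm w ∈ PX.source := fun w hw => (hznp w hw).2
  have hTw_uXo : ∀ w ∈ W, T w ∈ uXo := fun w hw => (hzG w hw).2
  have hPXsymmT : ∀ w ∈ W, PX.symm (T w) = PY.symm w := by
    intro w hw
    have := PX.left_inv (hzPXsrc w hw)
    rwa [hPXcoe] at this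
  have hST : ∀ w ∈ W, S (T w) = w := by
    intro w hw
    show PiY φ (PX.symm (T w)) = w
    rw [hPXsymmT w hw, ← hPYcoe]
    exact PY.right_inv (hWsub_target hw)
  have hVopen : IsOpen (PY.symm '' W) :=
    PY.symm.isOpen_image_of_subset_source hW_open
      (by rw [PY.symm_source]; exact hWsub_target)
  have hVsub : PY.symm '' W ⊆ PX.source := by
    rintro _ ⟨w, hw, rfl⟩; exact hzPXsrc w hw
  have hTW_eq : T '' W = ⇑PX '' (⇑PY.symm '' W) := by
    rw [← Set.image_comp]; rfl
  have hTW_open : IsOpen (T '' W) := by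
    rw [hTW_eq]; exact PX.isOpen_image_of_subset_source hVopen hVsub
  have hTinj : Set.InjOn T W := fun w hw w' hw' h => by
    rw [← hST w hw, ← hST w' hw', h]
  have hTcd : ContDiffOn ℝ 1 T W := by
    refine ContDiffOn.comp (hcdXon) (hsymmYon.mono ?_) ?_
    · exact fun w hw => interior_subset hw.1.1
    · exact fun w hw => interior_subset (hznp w hw).1.1.2
  have hScd : ContDiffOn ℝ 1 S (T '' W) := by
    refine ContDiffOn.comp (hcdYon) (hsymmXon.mono ?_) ?_
    · rintro _ ⟨w, hw, rfl⟩; exact interior_subset (hTw_uXo w hw).1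
    · rintro _ ⟨w, hw, rfl⟩
      show PX.symm (T w) ∈ nYs
      rw [hPXsymmT w hw]
      exact interior_subset (hznp w hw).1.1.1
  set U : Set (ℝ×ℝ×ℝ×ℝ) := np ∩ (PiY φ) ⁻¹' W with hUdef
  have hU_open : IsOpen U :=
    ContinuousOn.isOpen_inter_preimage
      (hcdYon.continuousOn.mono (fun q hq => interior_subset hq.1.1.1)) hnp_open hW_open
  have hpU : p ∈ U := ⟨hpnp, hPiYpW⟩
  have hTPiY : ∀ q ∈ U, T (PiY φ q) = PiX φ q := by
    intro q hq
    show PiX φ (PY.symm (PiY φ q)) = PiX φ q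
    congr 1
    have := PY.left_inv hq.1.1.2
    rwa [hPYcoe] at this
  exact ⟨U, W, T, S, hU_open, hpU, hW_open, hPiYpW, hTW_open, hTinj, hTcd, hScd, hST, hTPiY⟩
end

section
/- Let X be a Banach space and Y, Z normed vector spaces over ℝ. Let N : X → Y be an injective continuous linear map, let K : X → Z be a compact continuous linear operator, and suppose there exist constants C ≥ 0 and C_s ≥ 0 such that ‖f‖_X ≤ C‖N f‖_Y + C_s‖K f‖_Z for all f ∈ X. Then there exists a constant C′ > 0 such that ‖f‖_X ≤ C′‖N f‖_Y for all f ∈ X. (The abstract functional-analytic content of Proposition 6.2: an a priori estimate with a compact error term together with injectivity yields a stability estimate.) -/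
/-- Proposition 6.2 (abstract form): if N is an injective continuous linear
map, K is a compact operator, and ‖f‖ ≤ C‖Nf‖ + C_s‖Kf‖ for all f, then there
is C′ > 0 with ‖f‖ ≤ C′‖Nf‖ for all f. -/
theorem stmt11 {X Y Z : Type*}
    [NormedAddCommGroup X] [NormedSpace ℝ X] [CompleteSpace X]
    [NormedAddCommGroup Y] [NormedSpace ℝ Y]
    [NormedAddCommGroup Z] [NormedSpace ℝ Z]
    (N : X →L[ℝ] Y) (K : X →L[ℝ] Z)
    (hN : Function.Injective N) (hK : IsCompactOperator K)
    (C Cs : ℝ) (hC : 0 ≤ C) (hCs : 0 ≤ Cs)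
    (hest : ∀ f : X, ‖f‖ ≤ C * ‖N f‖ + Cs * ‖K f‖) :
    ∃ C' > 0, ∀ f : X, ‖f‖ ≤ C' * ‖N f‖ := by
  by_contra h
  push_neg at h
  -- construct unit vectors gₙ with ‖N gₙ‖ < 1/(n+1)
  have hseq : ∀ n : ℕ, ∃ g : X, ‖g‖ = 1 ∧ ‖N g‖ < 1 / (n + 1) := by
    intro n
    obtain ⟨f, hf⟩ := h (n + 1 : ℝ) (by positivity)
    have hf0 : f ≠ 0 := by
      rintro rfl
      simp at hf
    have hfn : (0:ℝ) < ‖f‖ := norm_pos_iff.2 hf0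
    refine ⟨‖f‖⁻¹ • f, ?_, ?_⟩
    · rw [norm_smul, norm_inv, norm_norm, inv_mul_cancel₀ hfn.ne']
    · rw [map_smul, norm_smul, norm_inv, norm_norm, inv_mul_eq_div,
        div_lt_div_iff₀ hfn (by positivity : (0:ℝ) < (n:ℝ)+1)]
      nlinarith [hf]
  choose g hg1 hg2 using hseq
  -- K image of closed unit ball is in a compact set
  obtain ⟨M, hMc, hMs⟩ := hK.image_closedBall_subset_compact (𝕜₁ := ℝ) 1
  have hgM : ∀ n, K (g n) ∈ M := by
    intro n
    exact hMs ⟨g n, by simp [Metric.mem_closedBall, (hg1 n).le, dist_zero_right, hg1 n], rfl⟩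
  obtain ⟨z, _, φ, hφ, hz⟩ := hMc.tendsto_subseq hgM
  set u : ℕ → X := fun n => g (φ n) with hu
  -- N (u n) → 0
  have hNu : Filter.Tendsto (fun n => ‖N (u n)‖) Filter.atTop (nhds 0) := by
    have h1 : Filter.Tendsto (fun n : ℕ => 1 / ((n:ℝ) + 1)) Filter.atTop (nhds 0) :=
      tendsto_one_div_add_atTop_nhds_zero_nat
    refine squeeze_zero (fun n => norm_nonneg _) (fun n => ?_) h1
    calc ‖N (u n)‖ ≤ 1 / ((φ n : ℝ) + 1) := (hg2 (φ n)).le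
      _ ≤ 1 / ((n:ℝ) + 1) := by
          apply one_div_le_one_div_of_le (by positivity)
          have : (n:ℝ) ≤ (φ n : ℝ) := Nat.cast_le.2 hφ.le_apply
          linarith
  -- u is Cauchy
  have hcauchy : CauchySeq u := by
    rw [Metric.cauchySeq_iff]
    intro ε hε
    have hv : Filter.Tendsto (fun n => C * ‖N (u n)‖ + Cs * dist (K (u n)) z)
        Filter.atTop (nhds 0) := by
      have : Filter.Tendsto (fun n => dist (K (u n)) z) Filter.atTop (nhds 0) :=
        tendsto_iff_dist_tendsto_zero.1 hz
      have := ((hNu.const_mul C).add (this.const_mul Cs))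
      simpa using this
    rw [Metric.tendsto_atTop] at hv
    obtain ⟨n0, hn0⟩ := hv (ε / 2) (by linarith)
    refine ⟨n0, fun a ha b hb => ?_⟩
    have hva := hn0 a ha
    have hvb := hn0 b hb
    rw [Real.dist_eq, sub_zero] at hva hvb
    have hvap : C * ‖N (u a)‖ + Cs * dist (K (u a)) z < ε / 2 :=
      lt_of_abs_lt hva
    have hvbp : C * ‖N (u b)‖ + Cs * dist (K (u b)) z < ε / 2 :=
      lt_of_abs_lt hvb
    rw [dist_eq_norm]
    calc ‖u a - u b‖ ≤ C * ‖N (u a - u b)‖ + Cs * ‖K (u a - u b)‖ := hest _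
      _ ≤ C * (‖N (u a)‖ + ‖N (u b)‖) + Cs * (dist (K (u a)) z + dist (K (u b)) z) := by
          gcongr
          · rw [map_sub]; exact norm_sub_le _ _
          · rw [map_sub, ← dist_eq_norm]
            exact dist_triangle_right _ _ _
      _ = (C * ‖N (u a)‖ + Cs * dist (K (u a)) z) + (C * ‖N (u b)‖ + Cs * dist (K (u b)) z) := by
          ring
      _ < ε / 2 + ε / 2 := by exact add_lt_add hvap hvbp
      _ = ε := by ring
  obtain ⟨l, hl⟩ := cauchySeq_tendsto_of_complete hcauchy
  have hnorml : ‖l‖ = 1 := by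
    have : Filter.Tendsto (fun n => ‖u n‖) Filter.atTop (nhds ‖l‖) := hl.norm
    have h1 : (fun n => ‖u n‖) = fun _ => (1:ℝ) := funext fun n => hg1 (φ n)
    rw [h1] at this
    exact (tendsto_const_nhds_iff.1 this).symm
  have hNl : N l = 0 := by
    have h1 : Filter.Tendsto (fun n => N (u n)) Filter.atTop (nhds (N l)) :=
      (N.continuous.tendsto l).comp hl
    have h2 : Filter.Tendsto (fun n => N (u n)) Filter.atTop (nhds 0) := by
      rwa [tendsto_zero_iff_norm_tendsto_zero]
    exact tendsto_nhds_unique h1 h2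
  have : l = 0 := hN (by simpa using hNl)
  rw [this, norm_zero] at hnorml
  exact zero_ne_one hnorml
end
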